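/- arXiv:2310.02839 — 4 statements merged into one kernel-verified Lean document; each statement's English description precedes it below -/
import Mathlib

section
/- There exists an integer k_0 such that for all integers k ≥ k_0 the following holds: for every real α with 0 < α < 0.99 and every finite set Y ⊆ [0,1]^k ⊂ ℝ^k such that |u - v| > α·√k for every two distinct points u, v ∈ Y, one has |Y| · α^k ≤ 0.999^k. -/
open MeasureTheory Set Finset

namespace Stmt15Aux


lemma sum_prod_weight (n k : ℕ) (w : Fin n → ℝ) :
    ∑ c : Fin k → Fin n, ∏ i, w (c i) = (∑ j, w j)^k := by
  have h := (Finset.prod_univ_sum (fun _ : Fin k => (univ : Finset (Fin n)))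
      (fun _ j => w j)).symm
  rw [Fintype.piFinset_univ] at h
  rw [h, Finset.prod_const, Finset.card_univ, Fintype.card_fin]

lemma cheb_core (n k : ℕ) (w g : Fin n → ℝ) (hg : ∑ j, w j * g j = 0) :
    ∑ c : Fin k → Fin n, (∏ i, w (c i)) * (∑ i, g (c i))^2
      = k * (∑ j, w j * g j ^ 2) * (∑ j, w j)^(k-1) := by
  classical
  have key : ∀ i₁ i₂ : Fin k,
      ∑ c : Fin k → Fin n, (∏ i, w (c i)) * (g (c i₁) * g (c i₂))
        = if i₁ = i₂ then (∑ j, w j * g j ^ 2) * (∑ j, w j)^(k-1) else 0 := by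
    intro i₁ i₂
    set H : Fin k → Fin n → ℝ :=
      fun (i : Fin k) (j : Fin n) =>
        w j * ((if i₁ = i then g j else 1) * (if i₂ = i then g j else 1)) with hHdef
    have hH : ∀ c : Fin k → Fin n,
        (∏ i, w (c i)) * (g (c i₁) * g (c i₂)) = ∏ i, H i (c i) := by
      intro c
      simp only [hHdef]
      rw [Finset.prod_mul_distrib]
      congr 1
      rw [Finset.prod_mul_distrib]
      simp [Finset.prod_ite_eq]
    have h2 : ∑ c : Fin k → Fin n, (∏ i, w (c i)) * (g (c i₁) * g (c i₂))
        = ∏ i, ∑ j, H i j := by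
      have h := (Finset.prod_univ_sum (fun _ : Fin k => (univ : Finset (Fin n)))
        (fun i j => H i j)).symm
      rw [Fintype.piFinset_univ] at h
      rw [← h]
      exact Finset.sum_congr rfl fun c _ => hH c
    rw [h2]
    by_cases hii : i₁ = i₂
    · subst hii
      simp only [if_pos rfl]
      have hfac : ∀ i : Fin k, ∑ j, H i j
          = if i₁ = i then (∑ j, w j * g j ^ 2) else (∑ j, w j) := by
        intro i
        by_cases h : i₁ = i <;> simp [hHdef, h, sq, mul_assoc]
      calc ∏ i, ∑ j, H i j
          = ∏ i, (if i₁ = i then (∑ j, w j * g j ^ 2) else (∑ j, w j)) :=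
            Finset.prod_congr rfl fun i _ => hfac i
        _ = (∑ j, w j * g j ^ 2) * (∑ j, w j)^(k-1) := by
            rw [← Finset.mul_prod_erase univ _ (Finset.mem_univ i₁)]
            simp only [if_pos rfl]
            congr 1
            rw [Finset.prod_congr rfl (fun i hi => by
              rw [if_neg (fun hh => (Finset.ne_of_mem_erase hi) hh.symm)]), Finset.prod_const,
              Finset.card_erase_of_mem (Finset.mem_univ i₁), Finset.card_univ,
              Fintype.card_fin]
    · rw [if_neg hii]
      apply Finset.prod_eq_zero (Finset.mem_univ i₁)
      have hrw : ∑ j, H i₁ j = ∑ j, w j * g j := by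
        apply Finset.sum_congr rfl
        intro j _
        simp only [hHdef, if_pos rfl, if_neg (fun hh : i₂ = i₁ => hii hh.symm)]
        simp
      rw [hrw, hg]
  calc ∑ c : Fin k → Fin n, (∏ i, w (c i)) * (∑ i, g (c i))^2
      = ∑ c : Fin k → Fin n, ∑ i₁, ∑ i₂, (∏ i, w (c i)) * (g (c i₁) * g (c i₂)) := by
        apply Finset.sum_congr rfl
        intro c _
        rw [sq, Finset.sum_mul_sum, Finset.mul_sum]
        exact Finset.sum_congr rfl fun i₁ _ => by rw [Finset.mul_sum]
    _ = ∑ i₁, ∑ i₂, ∑ c : Fin k → Fin n, (∏ i, w (c i)) * (g (c i₁) * g (c i₂)) := by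
        rw [Finset.sum_comm]
        exact Finset.sum_congr rfl fun i₁ _ => Finset.sum_comm
    _ = ∑ i₁ : Fin k, ∑ i₂ : Fin k,
          (if i₁ = i₂ then (∑ j, w j * g j ^ 2) * (∑ j, w j)^(k-1) else 0) :=
        Finset.sum_congr rfl fun i₁ _ => Finset.sum_congr rfl fun i₂ _ => key i₁ i₂
    _ = k * (∑ j, w j * g j ^ 2) * (∑ j, w j)^(k-1) := by
        simp [Finset.sum_ite_eq]
        ring


/-- folded interval at distance `[u,v)` from `y` inside `[0,1]` -/
def K (y u v : ℝ) : Set ℝ :=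
  Ico (y+u) (min (y+v) 1) ∪ Ioo (1-v) (min (1-u) y)

lemma K_meas (y u v : ℝ) : MeasurableSet (K y u v) :=
  (measurableSet_Ico).union measurableSet_Ioo

/-- fold coordinate -/
noncomputable def tf (y x : ℝ) : ℝ := if y ≤ x then x - y else 1 - x

lemma mem_K_t {y u v x : ℝ} (hu : 0 ≤ u) (hx : x ∈ K y u v) :
    u ≤ tf y x ∧ tf y x < v := by
  rcases hx with h | h
  · obtain ⟨h1, h2⟩ := h
    have hyx : y ≤ x := by linarith
    rw [tf, if_pos hyx]
    exact ⟨by linarith, by linarith [lt_of_lt_of_le h2 (min_le_left _ _)]⟩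
  · obtain ⟨h1, h2⟩ := h
    have hxy : ¬ (y ≤ x) := by
      have := lt_of_lt_of_le h2 (min_le_right _ _)
      exact not_le.mpr this
    rw [tf, if_neg hxy]
    constructor
    · have := lt_of_lt_of_le h2 (min_le_left _ _)
      linarith
    · linarith

lemma K_subset {y u v : ℝ} (hy0 : 0 ≤ y) (hy1 : y ≤ 1) (hu : 0 ≤ u) (hv : v ≤ 1) :
    K y u v ⊆ Icc 0 1 := by
  intro x hx
  rcases hx with h | h
  · exact ⟨by linarith [h.1], by linarith [lt_of_lt_of_le h.2 (min_le_right _ _)]⟩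
  · exact ⟨by linarith [h.1], by linarith [lt_of_lt_of_le h.2 (min_le_right _ _)]⟩

lemma K_dist {y u v x : ℝ} (hy0 : 0 ≤ y) (hy1 : y ≤ 1) (hu : 0 ≤ u) (hv : 0 ≤ v)
    (hx : x ∈ K y u v) : (x - y)^2 ≤ v^2 := by
  rcases hx with h | h
  · have h1 := h.1
    have h2 := lt_of_lt_of_le h.2 (min_le_left _ _)
    nlinarith
  · have h1 := h.1
    have h2 := lt_of_lt_of_le h.2 (min_le_right _ _)
    nlinarith

lemma K_disj {y u v u' v' : ℝ} (hu : 0 ≤ u) (hu' : 0 ≤ u') (h : v ≤ u') :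
    Disjoint (K y u v) (K y u' v') := by
  rw [Set.disjoint_left]
  intro x hx hx'
  have h1 := mem_K_t hu hx
  have h2 := mem_K_t hu' hx'
  linarith [h1.2, h2.1]

lemma K_vol {y u v : ℝ} (hy0 : 0 ≤ y) (hy1 : y ≤ 1) (hu : 0 ≤ u) (huv : u ≤ v) (hv : v ≤ 1) :
    volume (K y u v) = ENNReal.ofReal (v - u) := by
  have hdisj : Disjoint (Ico (y+u) (min (y+v) 1)) (Ioo (1-v) (min (1-u) y)) := by
    rw [Set.disjoint_left]
    intro x hx hx'
    have := hx.1
    have := lt_of_lt_of_le hx'.2 (min_le_right _ _)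
    linarith
  rw [K, measure_union hdisj measurableSet_Ioo, Real.volume_Ico, Real.volume_Ioo]
  rcases le_or_gt (y + v) 1 with hc | hc
  · -- first piece full, second empty
    rw [min_eq_left hc]
    have h2 : min (1-u) y - (1-v) ≤ 0 := by
      rcases min_cases (1-u) y with ⟨hm, _⟩ | ⟨hm, _⟩ <;> rw [hm] <;> linarith
    rw [ENNReal.ofReal_eq_zero.mpr h2, add_zero]
    congr 1; ring
  · rw [min_eq_right (le_of_lt hc)]
    rcases le_or_gt (y + u) 1 with hc2 | hc2
    · -- split case
      have hm2 : min (1-u) y = y := min_eq_right (by linarith)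
      rw [hm2, ← ENNReal.ofReal_add (by linarith) (by linarith)]
      congr 1; ring
    · -- all on left side
      have hm2 : min (1-u) y = 1-u := min_eq_left (by linarith)
      rw [hm2]
      rw [ENNReal.ofReal_eq_zero.mpr (by linarith), zero_add]
      congr 1; ring


lemma dist_sq_eq (k : ℕ) (u v : EuclideanSpace ℝ (Fin k)) :
    dist u v ^ 2 = ∑ i, (u i - v i)^2 := by
  rw [EuclideanSpace.dist_eq, Real.sq_sqrt (Finset.sum_nonneg fun i _ => sq_nonneg _)]
  exact Finset.sum_congr rfl fun i _ => by rw [Real.dist_eq, sq_abs]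

lemma plotkin (k : ℕ) (hk : 0 < k) (α : ℝ) (hα : (18/25:ℝ) < α) (hα1 : α < 1)
    (Y : Finset (EuclideanSpace ℝ (Fin k)))
    (hcube : ∀ y ∈ Y, ∀ i, y i ∈ Set.Icc (0:ℝ) 1)
    (hdist : ∀ u ∈ Y, ∀ v ∈ Y, u ≠ v → α * Real.sqrt k < dist u v) :
    (Y.card : ℝ) ≤ 29 := by
  classical
  rcases Finset.eq_empty_or_nonempty Y with hY | hY
  · simp [hY]
  set N : ℝ := (Y.card : ℝ) with hN
  have hN0 : 0 < N := by
    have h : 0 < Y.card := Finset.card_pos.mpr hY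
    rw [hN]
    exact_mod_cast h
  have hN1 : 1 ≤ N := by
    have h : 1 ≤ Y.card := Finset.card_pos.mpr hY
    rw [hN]
    exact_mod_cast h
  have hub : ∑ u ∈ Y, ∑ v ∈ Y, dist u v ^ 2 ≤ N^2 * k / 2 := by
    have h1 : ∑ u ∈ Y, ∑ v ∈ Y, dist u v ^ 2
        = ∑ i : Fin k, ∑ u ∈ Y, ∑ v ∈ Y, (u i - v i)^2 :=
      calc ∑ u ∈ Y, ∑ v ∈ Y, dist u v ^2
          = ∑ u ∈ Y, ∑ v ∈ Y, ∑ i : Fin k, (u i - v i)^2 :=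
            Finset.sum_congr rfl fun u _ =>
              Finset.sum_congr rfl fun v _ => dist_sq_eq k u v
        _ = ∑ u ∈ Y, ∑ i : Fin k, ∑ v ∈ Y, (u i - v i)^2 :=
            Finset.sum_congr rfl fun u _ => Finset.sum_comm
        _ = ∑ i : Fin k, ∑ u ∈ Y, ∑ v ∈ Y, (u i - v i)^2 := Finset.sum_comm
    rw [h1]
    have h2 : ∀ i : Fin k, ∑ u ∈ Y, ∑ v ∈ Y, (u i - v i)^2 ≤ N^2/2 := by
      intro i
      set S1 := ∑ u ∈ Y, u i with hS1
      set S2 := ∑ u ∈ Y, (u i)^2 with hS2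
      have hexp : ∑ u ∈ Y, ∑ v ∈ Y, (u i - v i)^2 = 2*N*S2 - 2*S1^2 := by
        have hrow : ∀ u ∈ Y, ∑ v ∈ Y, (u i - v i)^2 = N*(u i)^2 - 2*(u i)*S1 + S2 := by
          intro u _
          have hv : ∀ v ∈ Y, (u i - v i)^2 = (u i)^2 - 2*(u i)*(v i) + (v i)^2 :=
            fun v _ => by ring
          rw [Finset.sum_congr rfl hv, Finset.sum_add_distrib, Finset.sum_sub_distrib,
            Finset.sum_const, nsmul_eq_mul, ← Finset.mul_sum, ← hS1, ← hS2, ← hN]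
        rw [Finset.sum_congr rfl hrow, Finset.sum_add_distrib, Finset.sum_sub_distrib,
          Finset.sum_const, nsmul_eq_mul, ← Finset.mul_sum, ← hS2, ← hN]
        have r2 : ∑ u ∈ Y, 2*(u i)*S1 = 2*S1^2 := by
          calc ∑ u ∈ Y, 2*(u i)*S1 = ∑ u ∈ Y, (u i)*(2*S1) :=
                Finset.sum_congr rfl fun u _ => by ring
            _ = S1*(2*S1) := by rw [← Finset.sum_mul, ← hS1]
            _ = 2*S1^2 := by ring
        rw [r2]
        ring
      rw [hexp]
      have hbound : ∀ u ∈ Y, (u i)^2 ≤ u i := by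
        intro u hu
        obtain ⟨h0, h1⟩ := hcube u hu i
        nlinarith
      have hS21 : S2 ≤ S1 := Finset.sum_le_sum hbound
      have hS1N : S1 ≤ N := by
        rw [hS1, hN]
        calc ∑ u ∈ Y, u i ≤ ∑ u ∈ Y, 1 := Finset.sum_le_sum fun u hu => (hcube u hu i).2
          _ = (Y.card : ℝ) := by rw [Finset.sum_const, nsmul_eq_mul, mul_one]
      have hS10 : 0 ≤ S1 := Finset.sum_nonneg fun u hu => (hcube u hu i).1
      nlinarith [sq_nonneg (N - 2*S1), mul_le_mul_of_nonneg_left hS21 (le_of_lt (by linarith : (0:ℝ) < 2*N))]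
    calc ∑ i : Fin k, ∑ u ∈ Y, ∑ v ∈ Y, (u i - v i)^2
        ≤ ∑ _i : Fin k, N^2/2 := Finset.sum_le_sum fun i _ => h2 i
      _ = N^2 * k / 2 := by
          rw [Finset.sum_const, Finset.card_univ, Fintype.card_fin, nsmul_eq_mul]
          ring
  have hlb : N * (N - 1) * (α^2 * k) ≤ ∑ u ∈ Y, ∑ v ∈ Y, dist u v ^ 2 := by
    have hterm : ∀ u ∈ Y, (N - 1) * (α^2 * k) ≤ ∑ v ∈ Y, dist u v ^ 2 := by
      intro u hu
      have hsub : ∑ v ∈ Y.erase u, dist u v ^ 2 ≤ ∑ v ∈ Y, dist u v ^ 2 :=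
        Finset.sum_le_sum_of_subset_of_nonneg (Finset.erase_subset u Y)
          (fun v _ _ => sq_nonneg _)
      have hcard : ((Y.erase u).card : ℝ) = N - 1 := by
        rw [Finset.card_erase_of_mem hu]
        rw [Nat.cast_sub (Finset.card_pos.mpr hY), Nat.cast_one]
      have heach : ∀ v ∈ Y.erase u, α^2 * k ≤ dist u v ^ 2 := by
        intro v hv
        have hne : u ≠ v := (Finset.ne_of_mem_erase hv).symm
        have hd := hdist u hu v (Finset.mem_of_mem_erase hv) hne
        have hsq : (α * Real.sqrt k)^2 = α^2 * k := by
          rw [mul_pow, Real.sq_sqrt (Nat.cast_nonneg k)]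
        rw [← hsq]
        apply sq_le_sq'
        · nlinarith [Real.sqrt_nonneg (k:ℝ), dist_nonneg (x := u) (y := v),
            mul_nonneg (by linarith : (0:ℝ) ≤ α) (Real.sqrt_nonneg (k:ℝ))]
        · exact le_of_lt hd
      calc (N-1) * (α^2*k) = ((Y.erase u).card : ℝ) * (α^2*k) := by rw [hcard]
        _ ≤ ∑ v ∈ Y.erase u, dist u v ^ 2 := by
            have := Finset.card_nsmul_le_sum (Y.erase u) (fun v => dist u v ^ 2) (α^2*k) heach
            rwa [nsmul_eq_mul] at this
        _ ≤ ∑ v ∈ Y, dist u v ^ 2 := hsub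
    calc N * (N-1) * (α^2*k) = (Y.card : ℝ) * ((N-1)*(α^2*k)) := by rw [← hN]; ring
      _ ≤ ∑ u ∈ Y, ∑ v ∈ Y, dist u v ^ 2 := by
          have := Finset.card_nsmul_le_sum Y (fun u => ∑ v ∈ Y, dist u v ^ 2)
            ((N-1)*(α^2*k)) hterm
          rwa [nsmul_eq_mul] at this
  have hcomb : N * (N - 1) * (α^2 * k) ≤ N^2 * k / 2 := le_trans hlb hub
  have hkpos : (0:ℝ) < (k:ℝ) := by exact_mod_cast hk
  have d1 : N * (N-1) * α^2 ≤ N^2/2 := by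
    by_contra hcon
    push_neg at hcon
    have h2 := mul_lt_mul_of_pos_right hcon hkpos
    ring_nf at h2 hcomb
    linarith
  have d2 : (N-1)*α^2 ≤ N/2 := by
    have h' : N * ((N-1)*α^2) ≤ N * (N/2) := by ring_nf; ring_nf at d1; linarith
    exact le_of_mul_le_mul_left h' hN0
  have d3 : (324/625 : ℝ) < α^2 := by nlinarith
  have d4 : (N-1) * (324/625) ≤ (N-1) * α^2 :=
    mul_le_mul_of_nonneg_left (le_of_lt d3) (by linarith)
  linarith


namespace S15
def En (j : ℕ) : ℕ := (86664*(j+1)^2 + 5000000) / 10000000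

noncomputable def w (j : ℕ) : ℝ := (9/10)^(En j) * (1/64)
noncomputable def A (j : ℕ) : ℝ := (((j:ℝ)+1)/64)^2
noncomputable def W : ℝ := ∑ j : Fin 64, w j
noncomputable def F1 : ℝ := ∑ j : Fin 64, w j * A j
noncomputable def E1 : ℝ := ∑ j : Fin 64, w j * (En j : ℝ)

def wq (j : ℕ) : ℚ := (9/10)^(En j) * (1/64)
def Wq : ℚ := ∑ j ∈ Finset.range 64, wq j
def F1q : ℚ := ∑ j ∈ Finset.range 64, wq j * (((j:ℚ)+1)/64)^2
def E1q : ℚ := ∑ j ∈ Finset.range 64, wq j * (En j : ℚ)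

lemma W_cast : W = (Wq : ℝ) := by
  rw [W, Wq, Fin.sum_univ_eq_sum_range (fun j => w j) 64]
  push_cast [wq, w]
  norm_num

lemma F1_cast : F1 = (F1q : ℝ) := by
  rw [F1, F1q, Fin.sum_univ_eq_sum_range (fun j => w j * A j) 64]
  push_cast [wq, w, A]
  norm_num

lemma E1_cast : E1 = (E1q : ℝ) := by
  rw [E1, E1q, Fin.sum_univ_eq_sum_range (fun j => w j * (En j:ℝ)) 64]
  push_cast [wq, w]
  norm_num

set_option maxRecDepth 10000 in
lemma certq1 : F1q < (81/625) * Wq := by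
  unfold F1q Wq wq
  simp only [Finset.sum_range_succ, Finset.sum_range_zero, En]
  norm_num

set_option maxRecDepth 10000 in
lemma certq2 : (227/50) * Wq < E1q := by
  unfold E1q Wq wq
  simp only [Finset.sum_range_succ, Finset.sum_range_zero, En]
  norm_num

set_option maxRecDepth 10000 in
lemma certq3 : (3607/5000:ℚ)^50 < Wq^50 * (10/9)^227 := by
  unfold Wq wq
  simp only [Finset.sum_range_succ, Finset.sum_range_zero, En]
  norm_num

set_option maxRecDepth 10000 in
lemma certqW : 0 < Wq := by
  unfold Wq wq
  simp only [Finset.sum_range_succ, Finset.sum_range_zero, En]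
  norm_num

lemma W_pos : 0 < W := by rw [W_cast]; exact_mod_cast certqW
lemma cert1 : F1 < (81/625) * W := by
  rw [W_cast, F1_cast]
  have h : ((F1q:ℚ):ℝ) < (((81/625) * Wq : ℚ):ℝ) := by exact_mod_cast certq1
  push_cast at h
  linarith
lemma cert2 : (227/50) * W < E1 := by
  rw [W_cast, E1_cast]
  have h : (((227/50) * Wq : ℚ):ℝ) < ((E1q:ℚ):ℝ) := by exact_mod_cast certq2
  push_cast at h
  linarith
lemma cert3 : (3607/5000:ℝ)^50 < W^50 * (10/9)^227 := by
  rw [W_cast]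
  have := certq3
  have h2 : ((3607/5000:ℚ)^50 : ℝ) < ((Wq^50 * (10/9)^227 : ℚ) : ℝ) := by exact_mod_cast this
  push_cast at h2 ⊢
  convert h2 using 2

end S15

namespace S15B
open S15
lemma w_nonneg (j : ℕ) : 0 ≤ w j := by
  unfold w; positivity

lemma prod_w_nonneg {k : ℕ} (c : Fin k → Fin 64) : 0 ≤ ∏ i, w (c i) :=
  Finset.prod_nonneg fun i _ => w_nonneg _

open scoped Classical in
noncomputable def Good (k : ℕ) : Finset (Fin k → Fin 64) :=
  Finset.univ.filter (fun c =>
    (∑ i, A (c i) ≤ (81/625:ℝ)*k) ∧ (227*k ≤ 50 * ∑ i, En (c i)))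

lemma markov {γ : Type*} (s : Finset γ) (μ h : γ → ℝ) (hμ : ∀ x ∈ s, 0 ≤ μ x)
    (hh : ∀ x ∈ s, 0 ≤ h x) (T : ℝ) (p : γ → Prop) [DecidablePred p]
    (hp : ∀ x ∈ s, p x → T ≤ h x) :
    T * ∑ x ∈ s.filter p, μ x ≤ ∑ x ∈ s, μ x * h x := by
  calc T * ∑ x ∈ s.filter p, μ x = ∑ x ∈ s.filter p, T * μ x := by rw [Finset.mul_sum]
    _ ≤ ∑ x ∈ s.filter p, μ x * h x := by
        apply Finset.sum_le_sum
        intro x hx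
        have hxs := Finset.mem_filter.mp hx
        calc T * μ x ≤ h x * μ x :=
              mul_le_mul_of_nonneg_right (hp x hxs.1 hxs.2) (hμ x hxs.1)
          _ = μ x * h x := by ring
    _ ≤ ∑ x ∈ s, μ x * h x := by
        apply Finset.sum_le_sum_of_subset_of_nonneg (Finset.filter_subset p s)
        intro x hx _
        exact mul_nonneg (hμ x hx) (hh x hx)

/-- one Chebyshev-type bad-set bound, abstract in the statistic -/
lemma bad_bound (k : ℕ) (f : Fin 64 → ℝ) (τ : ℝ) (hτ : 0 < τ)
    (p : (Fin k → Fin 64) → Prop) [DecidablePred p]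
    (hev : ∀ c, p c → (k:ℝ) * τ ≤ |∑ i, (W * f (c i) - (∑ j : Fin 64, w j * f j))|)
    (hk : 4 * (∑ j : Fin 64, w j * (W * f j - (∑ j' : Fin 64, w j' * f j'))^2) ≤ k * (W * τ^2)) 
    (hkpos : 0 < k) :
    ∑ c ∈ Finset.univ.filter p, ∏ i, w ((c : Fin k → Fin 64) i) ≤ W^k / 4 := by
  set F := ∑ j : Fin 64, w j * f j with hF
  set g : Fin 64 → ℝ := fun j => W * f j - F with hg
  have hWdef : (∑ j : Fin 64, w (j:ℕ)) = W := rfl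
  have hg0 : ∑ j : Fin 64, w (j:ℕ) * g j = 0 := by
    simp only [hg]
    have hsplit : ∑ x : Fin 64, w (x:ℕ) * (W * f x - F)
        = W * (∑ x : Fin 64, w (x:ℕ) * f x) - F * (∑ x : Fin 64, w (x:ℕ)) := by
      rw [Finset.mul_sum, Finset.mul_sum, ← Finset.sum_sub_distrib]
      exact Finset.sum_congr rfl fun x _ => by ring
    rw [hsplit, ← hF, hWdef]
    ring
  have hcore := cheb_core 64 k (fun j => w (j:ℕ)) g hg0
  set Sg : ℝ := ∑ j : Fin 64, w (j:ℕ) * g j ^ 2 with hSg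
  have hmk := markov Finset.univ (fun c : Fin k → Fin 64 => ∏ i, w (c i))
    (fun c => (∑ i, g (c i))^2) (fun c _ => prod_w_nonneg c) (fun c _ => sq_nonneg _)
    (((k:ℝ)*τ)^2) p
    (by
      intro c _ hc
      have := hev c hc
      calc ((k:ℝ)*τ)^2 ≤ |∑ i, (W * f (c i) - F)|^2 := by
            apply sq_le_sq' <;> nlinarith [abs_nonneg (∑ i, (W * f (c i) - F))]
        _ = (∑ i, g (c i))^2 := by rw [sq_abs]
      )
  rw [hcore] at hmk
  rw [hWdef] at hmk
  beta_reduce at hmk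
  set B := ∑ c ∈ Finset.univ.filter p, ∏ i, w ((c : Fin k → Fin 64) i) with hB
  have hWpow : (0:ℝ) < W^(k-1) := pow_pos W_pos _
  have hWk : W^k = W * W^(k-1) := by
    conv_lhs => rw [show k = 1 + (k-1) by omega]
    rw [pow_add, pow_one]
  have hkr : (0:ℝ) < (k:ℝ) := by exact_mod_cast hkpos
  have s1 : 4 * (((k:ℝ)*τ)^2 * B) ≤ 4 * ((k:ℝ) * Sg * W^(k-1)) := by linarith [hmk]
  have s3 : (4*Sg) * ((k:ℝ)*W^(k-1)) ≤ ((k:ℝ)*(W*τ^2)) * ((k:ℝ)*W^(k-1)) :=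
    mul_le_mul_of_nonneg_right hk (le_of_lt (mul_pos hkr hWpow))
  have s5 : 4*(((k:ℝ)*τ)^2*B) ≤ ((k:ℝ)*τ)^2 * W^k := by
    rw [hWk]
    nlinarith [s1, s3]
  have hpos : 0 < ((k:ℝ)*τ)^2 := by positivity
  have hc := (mul_le_mul_iff_right₀ hpos).mp
    (by linarith [s5] : ((k:ℝ)*τ)^2 * (4*B) ≤ ((k:ℝ)*τ)^2 * W^k)
  linarith



noncomputable def Sg (f : Fin 64 → ℝ) : ℝ :=
  ∑ j : Fin 64, w (j:ℕ) * (W * f j - (∑ j' : Fin 64, w (j':ℕ) * f j'))^2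

open scoped Classical in
lemma good_bound : ∃ k₁ : ℕ, 0 < k₁ ∧ ∀ k : ℕ, k₁ ≤ k →
    W^k / 2 ≤ ∑ c ∈ Good k, ∏ i, w ((c : Fin k → Fin 64) i) := by
  classical
  set τ₁ : ℝ := (81/625)*W - F1 with hτ₁def
  set τ₂ : ℝ := E1 - (227/50)*W with hτ₂def
  have hτ₁ : 0 < τ₁ := by have := cert1; rw [hτ₁def]; linarith
  have hτ₂ : 0 < τ₂ := by have := cert2; rw [hτ₂def]; linarith
  set fA : Fin 64 → ℝ := fun j => A (j:ℕ) with hfA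
  set fE : Fin 64 → ℝ := fun j => (En (j:ℕ) : ℝ) with hfE
  have hFA : (∑ j : Fin 64, w (j:ℕ) * fA j) = F1 := rfl
  have hFE : (∑ j : Fin 64, w (j:ℕ) * fE j) = E1 := rfl
  obtain ⟨m₁, hm₁⟩ := exists_nat_ge ((4 * Sg fA) / (W * τ₁^2))
  obtain ⟨m₂, hm₂⟩ := exists_nat_ge ((4 * Sg fE) / (W * τ₂^2))
  refine ⟨max (max m₁ m₂) 1, by omega, ?_⟩
  intro k hk
  have hkpos : 0 < k := by omega
  have hkr : (0:ℝ) < (k:ℝ) := by exact_mod_cast hkpos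
  have hk₁ : (m₁ : ℝ) ≤ (k:ℝ) := by exact_mod_cast le_trans (le_trans (le_max_left _ _) (le_max_left _ _)) hk
  have hk₂ : (m₂ : ℝ) ≤ (k:ℝ) := by exact_mod_cast le_trans (le_trans (le_max_right _ _) (le_max_left _ _)) hk
  have hWt₁ : 0 < W * τ₁^2 := mul_pos W_pos (by positivity)
  have hWt₂ : 0 < W * τ₂^2 := mul_pos W_pos (by positivity)
  have hgap₁ : 4 * Sg fA ≤ (k:ℝ) * (W * τ₁^2) := by
    have h := (div_le_iff₀ hWt₁).mp (le_trans hm₁ hk₁)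
    linarith
  have hgap₂ : 4 * Sg fE ≤ (k:ℝ) * (W * τ₂^2) := by
    have h := (div_le_iff₀ hWt₂).mp (le_trans hm₂ hk₂)
    linarith
  -- bad set bounds
  have hbad₁ : ∑ c ∈ Finset.univ.filter
      (fun c : Fin k → Fin 64 => ¬ (∑ i, A (c i) ≤ (81/625:ℝ)*k)), ∏ i, w ((c : Fin k → Fin 64) i)
      ≤ W^k / 4 := by
    apply bad_bound k fA τ₁ hτ₁ _ _ hgap₁ hkpos
    intro c hc
    push_neg at hc
    rw [hFA]
    have hsum : ∑ i, (W * fA (c i) - F1) = W * (∑ i, A ((c i):ℕ)) - (k:ℝ) * F1 := by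
      rw [Finset.sum_sub_distrib, Finset.sum_const, ← Finset.mul_sum]
      simp [hfA, Finset.card_univ, nsmul_eq_mul]
    rw [hsum]
    have h1 : W * ((81/625:ℝ)*k) ≤ W * (∑ i, A ((c i):ℕ)) :=
      mul_le_mul_of_nonneg_left (le_of_lt hc) (le_of_lt W_pos)
    have h2 : (k:ℝ) * τ₁ ≤ W * (∑ i, A ((c i):ℕ)) - (k:ℝ) * F1 := by
      rw [hτ₁def]; nlinarith [h1]
    exact le_trans h2 (le_abs_self _)
  have hbad₂ : ∑ c ∈ Finset.univ.filter
      (fun c : Fin k → Fin 64 => ¬ (227*k ≤ 50 * ∑ i, En ((c i):ℕ))), ∏ i, w ((c : Fin k → Fin 64) i)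
      ≤ W^k / 4 := by
    apply bad_bound k fE τ₂ hτ₂ _ _ hgap₂ hkpos
    intro c hc
    push_neg at hc
    rw [hFE]
    have hsum : ∑ i, (W * fE (c i) - E1) = W * (∑ i, (En ((c i):ℕ) : ℝ)) - (k:ℝ) * E1 := by
      rw [Finset.sum_sub_distrib, Finset.sum_const, ← Finset.mul_sum]
      simp [hfE, Finset.card_univ, nsmul_eq_mul]
    rw [hsum]
    have hcast : (∑ i, (En ((c i):ℕ) : ℝ)) < (227/50:ℝ) * k := by
      have h' : (50:ℕ) * ∑ i, En ((c i):ℕ) < 227*k := hc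
      have h'' : (50:ℝ) * (∑ i, (En ((c i):ℕ):ℝ)) < 227*(k:ℝ) := by
        push_cast
        exact_mod_cast h'
      linarith
    have h2 : W * (∑ i, (En ((c i):ℕ):ℝ)) - (k:ℝ)*E1 ≤ -((k:ℝ) * τ₂) := by
      have := mul_le_mul_of_nonneg_left (le_of_lt hcast) (le_of_lt W_pos)
      rw [hτ₂def]; nlinarith
    calc (k:ℝ) * τ₂ ≤ -(W * (∑ i, (En ((c i):ℕ):ℝ)) - (k:ℝ)*E1) := by linarith
      _ ≤ |W * (∑ i, (En ((c i):ℕ):ℝ)) - (k:ℝ)*E1| := neg_le_abs _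
  -- combine
  have htot : ∑ c : Fin k → Fin 64, ∏ i, w ((c:Fin k → Fin 64) i) = W^k := by
    have := sum_prod_weight 64 k (fun j => w (j:ℕ))
    exact this
  have hsplit := Finset.sum_filter_add_sum_filter_not Finset.univ
    (fun c : Fin k → Fin 64 => (∑ i, A ((c i):ℕ)) ≤ (81/625:ℝ)*k ∧ 227*k ≤ 50 * ∑ i, En ((c i):ℕ))
    (fun c : Fin k → Fin 64 => ∏ i, w ((c:Fin k→Fin 64) i))
  have hsub : Finset.univ.filter
      (fun c : Fin k → Fin 64 => ¬ ((∑ i, A ((c i):ℕ)) ≤ (81/625:ℝ)*k ∧ 227*k ≤ 50 * ∑ i, En ((c i):ℕ)))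
      ⊆ Finset.univ.filter (fun c : Fin k → Fin 64 => ¬ (∑ i, A ((c i):ℕ) ≤ (81/625:ℝ)*k))
        ∪ Finset.univ.filter (fun c : Fin k → Fin 64 => ¬ (227*k ≤ 50 * ∑ i, En ((c i):ℕ))) := by
    intro c hcmem
    rw [Finset.mem_filter] at hcmem
    rw [Finset.mem_union, Finset.mem_filter, Finset.mem_filter]
    rcases Classical.em ((∑ i, A ((c i):ℕ)) ≤ (81/625:ℝ)*k) with h | h
    · exact Or.inr ⟨Finset.mem_univ c, fun h2 => hcmem.2 ⟨h, h2⟩⟩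
    · exact Or.inl ⟨Finset.mem_univ c, h⟩
  have hbadsum : ∑ c ∈ Finset.univ.filter
      (fun c : Fin k → Fin 64 => ¬ ((∑ i, A ((c i):ℕ)) ≤ (81/625:ℝ)*k ∧ 227*k ≤ 50 * ∑ i, En ((c i):ℕ))),
      ∏ i, w ((c:Fin k→Fin 64) i) ≤ W^k/4 + W^k/4 := by
    calc _ ≤ ∑ c ∈ (Finset.univ.filter (fun c : Fin k → Fin 64 => ¬ (∑ i, A ((c i):ℕ) ≤ (81/625:ℝ)*k))
        ∪ Finset.univ.filter (fun c : Fin k → Fin 64 => ¬ (227*k ≤ 50 * ∑ i, En ((c i):ℕ)))),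
        ∏ i, w ((c:Fin k→Fin 64) i) :=
          Finset.sum_le_sum_of_subset_of_nonneg hsub (fun c _ _ => prod_w_nonneg c)
      _ ≤ _ := by
          have hui := Finset.sum_union_inter (s₁ := Finset.univ.filter (fun c : Fin k → Fin 64 => ¬ (∑ i, A ((c i):ℕ) ≤ (81/625:ℝ)*k)))
            (s₂ := Finset.univ.filter (fun c : Fin k → Fin 64 => ¬ (227*k ≤ 50 * ∑ i, En ((c i):ℕ))))
            (f := fun c : Fin k → Fin 64 => ∏ i, w ((c:Fin k→Fin 64) i))
          have hnn : 0 ≤ ∑ c ∈ (Finset.univ.filter (fun c : Fin k → Fin 64 => ¬ (∑ i, A ((c i):ℕ) ≤ (81/625:ℝ)*k))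
              ∩ Finset.univ.filter (fun c : Fin k → Fin 64 => ¬ (227*k ≤ 50 * ∑ i, En ((c i):ℕ)))),
              ∏ i, w ((c:Fin k→Fin 64) i) :=
            Finset.sum_nonneg fun c _ => prod_w_nonneg c
          linarith [hbad₁, hbad₂]
  rw [Good]
  have : ∑ c ∈ Finset.univ.filter
      (fun c : Fin k → Fin 64 => (∑ i, A ((c i):ℕ)) ≤ (81/625:ℝ)*k ∧ 227*k ≤ 50 * ∑ i, En ((c i):ℕ)),
      ∏ i, w ((c:Fin k→Fin 64) i) = W^k - ∑ c ∈ Finset.univ.filter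
      (fun c : Fin k → Fin 64 => ¬ ((∑ i, A ((c i):ℕ)) ≤ (81/625:ℝ)*k ∧ 227*k ≤ 50 * ∑ i, En ((c i):ℕ))),
      ∏ i, w ((c:Fin k→Fin 64) i) := by
    rw [← htot]
    linarith [hsplit]
  rw [this] -- may fail due to instance mismatch; then fix
  linarith [hbadsum]



end S15B

namespace S15C
open S15 S15B
lemma dist_sq_eq' (k : ℕ) (u v : EuclideanSpace ℝ (Fin k)) :
    dist u v ^ 2 = ∑ i, (u i - v i)^2 := by
  rw [EuclideanSpace.dist_eq, Real.sq_sqrt (Finset.sum_nonneg fun i _ => sq_nonneg _)]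
  exact Finset.sum_congr rfl fun i _ => by rw [Real.dist_eq, sq_abs]

lemma volume_branch : ∃ k₂ : ℕ, 0 < k₂ ∧ ∀ k : ℕ, k₂ ≤ k → ∀ α : ℝ, 0 < α → α ≤ 18/25 →
    ∀ Y : Finset (EuclideanSpace ℝ (Fin k)),
      (∀ y ∈ Y, ∀ i, y i ∈ Set.Icc (0:ℝ) 1) →
      (∀ u ∈ Y, ∀ v ∈ Y, u ≠ v → α * Real.sqrt k < dist u v) →
      (Y.card : ℝ) * α ^ k ≤ 2 * (3600/3607)^k := by
  classical
  obtain ⟨k₁, hk₁pos, hgood⟩ := good_bound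
  refine ⟨k₁, hk₁pos, ?_⟩
  intro k hk α hα0 hα72 Y hcube hdist
  have hkpos : 0 < k := lt_of_lt_of_le hk₁pos hk
  set s : ℝ := (25/18)*α with hs
  have hs0 : 0 < s := by rw [hs]; linarith
  have hs1 : s ≤ 1 := by rw [hs]; linarith
  set M : ℕ := (227*k+49)/50 with hM
  -- interval families
  set KK : (EuclideanSpace ℝ (Fin k)) → Fin k → Fin 64 → Set ℝ :=
    fun y i j => K (y i) (s*(j:ℕ)/64) (s*((j:ℕ)+1)/64) with hKK
  set box : (EuclideanSpace ℝ (Fin k)) → (Fin k → Fin 64) → Set (Fin k → ℝ) :=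
    fun y c => Set.pi Set.univ (fun i => KK y i (c i)) with hbox
  set Sy : (EuclideanSpace ℝ (Fin k)) → Set (Fin k → ℝ) :=
    fun y => (Set.pi Set.univ fun _ => Set.Icc (0:ℝ) 1)
      ∩ {x : Fin k → ℝ | ∑ i, (x i - y i)^2 ≤ α^2*(k:ℝ)/4} with hSy
  -- basic interval params
  have hintu : ∀ j : Fin 64, (0:ℝ) ≤ s*(j:ℕ)/64 := fun j => by positivity
  have hintuv : ∀ j : Fin 64, s*(j:ℕ)/64 ≤ s*((j:ℕ)+1)/64 := fun j => by
    gcongr <;> linarith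
  have hintv1 : ∀ j : Fin 64, s*((j:ℕ)+1)/64 ≤ 1 := fun j => by
    have hj : ((j:ℕ):ℝ) + 1 ≤ 64 := by
      have := j.isLt
      have : ((j:ℕ):ℝ) ≤ 63 := by exact_mod_cast Nat.lt_succ_iff.mp (by omega)
      linarith
    rw [div_le_one (by norm_num)]
    nlinarith [hs0, hs1]
  have hintv0 : ∀ j : Fin 64, (0:ℝ) ≤ s*((j:ℕ)+1)/64 := fun j => by positivity
  -- measurability of Sy
  have hSymeas : ∀ y : EuclideanSpace ℝ (Fin k), MeasurableSet (Sy y) := by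
    intro y
    apply MeasurableSet.inter
    · exact MeasurableSet.univ_pi fun i => measurableSet_Icc
    · apply measurableSet_le
      · exact Finset.measurable_sum _ fun i _ =>
          ((measurable_pi_apply i).sub measurable_const).pow_const 2
      · exact measurable_const
  -- box volume
  have hboxvol : ∀ (y : EuclideanSpace ℝ (Fin k)), (∀ i, y i ∈ Set.Icc (0:ℝ) 1) →
      ∀ c : Fin k → Fin 64, volume (box y c) = ENNReal.ofReal ((s/64)^k) := by
    intro y hy c
    rw [hbox]
    rw [volume_pi_pi]
    have hKvol : ∀ i, volume (KK y i (c i)) = ENNReal.ofReal (s/64) := by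
      intro i
      rw [hKK]
      rw [K_vol (hy i).1 (hy i).2 (hintu (c i)) (hintuv (c i)) (hintv1 (c i))]
      congr 1
      ring
    rw [Finset.prod_congr rfl (fun i _ => hKvol i), Finset.prod_const,
      Finset.card_univ, Fintype.card_fin, ← ENNReal.ofReal_pow (by positivity)]
  -- box subset Sy
  have hboxsub : ∀ (y : EuclideanSpace ℝ (Fin k)), (∀ i, y i ∈ Set.Icc (0:ℝ) 1) →
      ∀ c ∈ Good k, box y c ⊆ Sy y := by
    intro y hy c hcmem x hx
    rw [hbox, Set.mem_pi] at hx
    have hxK : ∀ i, x i ∈ KK y i (c i) := fun i => hx i (Set.mem_univ i)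
    rw [hSy]
    constructor
    · rw [Set.mem_pi]
      intro i _
      exact K_subset (hy i).1 (hy i).2 (hintu (c i)) (hintv1 (c i)) (hxK i)
    · rw [Set.mem_setOf_eq]
      have hP1 : ∑ i, A ((c i):ℕ) ≤ (81/625:ℝ)*k := ((Finset.mem_filter.mp hcmem).2).1
      have hterm : ∀ i, (x i - y i)^2 ≤ s^2 * A ((c i):ℕ) := by
        intro i
        have hd := K_dist (hy i).1 (hy i).2 (hintu (c i)) (hintv0 (c i)) (hxK i)
        calc (x i - y i)^2 ≤ (s*((((c i):ℕ):ℝ)+1)/64)^2 := hd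
          _ = s^2 * A ((c i):ℕ) := by simp only [A]; ring
      calc ∑ i, (x i - y i)^2 ≤ ∑ i, s^2 * A ((c i):ℕ) :=
            Finset.sum_le_sum fun i _ => hterm i
        _ = s^2 * ∑ i, A ((c i):ℕ) := by rw [Finset.mul_sum]
        _ ≤ s^2 * ((81/625)*k) := mul_le_mul_of_nonneg_left hP1 (sq_nonneg s)
        _ = α^2*k/4 := by rw [hs]; ring
  -- boxes pairwise disjoint
  have hboxdisj : ∀ y : EuclideanSpace ℝ (Fin k),
      ((Good k : Finset (Fin k → Fin 64)) : Set (Fin k → Fin 64)).PairwiseDisjoint (box y) := by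
    intro y
    intro c _ c' _ hne
    have hKd : ∀ i : Fin k, c i ≠ c' i → Disjoint (KK y i (c i)) (KK y i (c' i)) := by
      intro i hii
      rcases lt_or_gt_of_ne hii with hlt | hgt
      · have hnat : ((c i : ℕ):ℝ) + 1 ≤ ((c' i : ℕ):ℝ) := by
          have : (c i : ℕ) + 1 ≤ (c' i : ℕ) := hlt
          exact_mod_cast this
        have hvu : s*(((c i):ℕ):ℝ)+1 = s*(((c i):ℕ):ℝ)+1 := rfl
        have hle : s*((((c i):ℕ):ℝ)+1)/64 ≤ s*(((c' i):ℕ):ℝ)/64 := by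
          gcongr
          all_goals first | exact hs0.le | exact hnat | linarith
        rw [hKK]
        exact K_disj (hintu (c i)) (hintu (c' i)) hle
      · have hnat : ((c' i : ℕ):ℝ) + 1 ≤ ((c i : ℕ):ℝ) := by
          have : (c' i : ℕ) + 1 ≤ (c i : ℕ) := hgt
          exact_mod_cast this
        have hle : s*((((c' i):ℕ):ℝ)+1)/64 ≤ s*(((c i):ℕ):ℝ)/64 := by
          gcongr
          all_goals first | exact hs0.le | exact hnat | linarith
        rw [hKK]
        exact (K_disj (hintu (c' i)) (hintu (c i)) hle).symm
    obtain ⟨i, hi⟩ := Function.ne_iff.mp hne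
    rw [Function.onFun, Set.disjoint_left]
    intro x hx hx'
    rw [hbox, Set.mem_pi] at hx hx'
    exact Set.disjoint_left.mp (hKd i hi) (hx i (Set.mem_univ i)) (hx' i (Set.mem_univ i))
  have hboxmeas : ∀ (y : EuclideanSpace ℝ (Fin k)) (c : Fin k → Fin 64),
      MeasurableSet (box y c) := by
    intro y c
    rw [hbox]
    exact MeasurableSet.univ_pi fun i => K_meas _ _ _
  -- per-y lower bound
  have hSyvol : ∀ y ∈ Y, ENNReal.ofReal ((((Good k).card):ℝ) * (s/64)^k) ≤ volume (Sy y) := by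
    intro y hy
    have hyc := hcube y hy
    calc ENNReal.ofReal ((((Good k).card):ℝ) * (s/64)^k)
        = (Good k).card • ENNReal.ofReal ((s/64)^k) := by
          rw [nsmul_eq_mul, ← ENNReal.ofReal_natCast ((Good k).card),
            ← ENNReal.ofReal_mul (Nat.cast_nonneg _)]
      _ = ∑ _c ∈ Good k, ENNReal.ofReal ((s/64)^k) := (Finset.sum_const _).symm
      _ = ∑ c ∈ Good k, volume (box y c) :=
          (Finset.sum_congr rfl fun c _ => (hboxvol y hyc c).symm)
      _ = volume (⋃ c ∈ Good k, box y c) :=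
          (measure_biUnion_finset (hboxdisj y) (fun c _ => hboxmeas y c)).symm
      _ ≤ volume (Sy y) :=
          measure_mono (Set.iUnion₂_subset fun c hc => hboxsub y hyc c hc)
  -- Sy pairwise disjoint
  have hSydisj : (↑Y : Set (EuclideanSpace ℝ (Fin k))).PairwiseDisjoint Sy := by
    intro u hu v hv huv
    rw [Function.onFun, Set.disjoint_left]
    intro x hxu hxv
    rw [hSy] at hxu hxv
    have hu2 := hxu.2
    have hv2 := hxv.2
    rw [Set.mem_setOf_eq] at hu2 hv2
    set z : EuclideanSpace ℝ (Fin k) := WithLp.toLp 2 x with hz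
    have hdz : ∀ (p : EuclideanSpace ℝ (Fin k)), (∑ i, (x i - p i)^2 ≤ α^2*(k:ℝ)/4) →
        dist p z ≤ α * Real.sqrt k / 2 := by
      intro p hp
      rw [EuclideanSpace.dist_eq]
      have hrw : ∑ i, dist (p i) (z i)^2 = ∑ i, (x i - p i)^2 :=
        Finset.sum_congr rfl fun i _ => by
          rw [Real.dist_eq, sq_abs]
          have : z i = x i := rfl
          rw [this]
          ring
      rw [hrw]
      have h2 : α^2*(k:ℝ)/4 = (α * Real.sqrt k / 2)^2 := by
        rw [div_pow, mul_pow, Real.sq_sqrt (Nat.cast_nonneg k)]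
        ring
      calc Real.sqrt (∑ i, (x i - p i)^2) ≤ Real.sqrt (α^2*(k:ℝ)/4) := Real.sqrt_le_sqrt hp
        _ = α*Real.sqrt k/2 := by
            rw [h2, Real.sqrt_sq (by positivity)]
    have h1 := hdz u hu2
    have h2 := hdz v hv2
    have htri : dist u v ≤ dist u z + dist z v := dist_triangle u z v
    have hcomm : dist z v = dist v z := dist_comm z v
    have hd := hdist u hu v hv huv
    linarith
  -- total measure bound
  have hcubevol : volume (Set.pi Set.univ fun _ : Fin k => Set.Icc (0:ℝ) 1) = 1 := by
    rw [volume_pi_pi]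
    simp [Real.volume_Icc]
  have hsum1 : ∑ y ∈ Y, volume (Sy y) ≤ 1 := by
    rw [← measure_biUnion_finset hSydisj (fun y _ => hSymeas y)]
    calc volume (⋃ y ∈ Y, Sy y)
        ≤ volume (Set.pi Set.univ fun _ : Fin k => Set.Icc (0:ℝ) 1) := by
          apply measure_mono
          apply Set.iUnion₂_subset
          intro y _
          rw [hSy]
          exact Set.inter_subset_left
      _ = 1 := hcubevol
  have hkey : ENNReal.ofReal ((Y.card:ℝ) * ((((Good k).card):ℝ) * (s/64)^k)) ≤ 1 := by
    calc ENNReal.ofReal ((Y.card:ℝ) * ((((Good k).card):ℝ) * (s/64)^k))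
        = Y.card • ENNReal.ofReal ((((Good k).card):ℝ) * (s/64)^k) := by
          rw [nsmul_eq_mul, ← ENNReal.ofReal_natCast Y.card,
            ← ENNReal.ofReal_mul (Nat.cast_nonneg _)]
      _ ≤ ∑ y ∈ Y, volume (Sy y) := Finset.card_nsmul_le_sum Y _ _ hSyvol
      _ ≤ 1 := hsum1
  have hreal : (Y.card:ℝ) * ((((Good k).card):ℝ) * (s/64)^k) ≤ 1 := by
    rw [← ENNReal.ofReal_one] at hkey
    exact (ENNReal.ofReal_le_ofReal_iff (by norm_num)).mp hkey
  -- counting bound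
  have hWk2 := hgood k hk
  have hcnt : W^k/2 ≤ (((Good k).card):ℝ) * ((1/64:ℝ)^k * (9/10)^M) := by
    have hper : ∀ c ∈ Good k, ∏ i, w (((c : Fin k → Fin 64) i):ℕ) ≤ (1/64:ℝ)^k * (9/10)^M := by
      intro c hc
      have hP2 : 227*k ≤ 50 * ∑ i, En ((c i):ℕ) := ((Finset.mem_filter.mp hc).2).2
      have hMle : M ≤ ∑ i, En ((c i):ℕ) := by rw [hM]; omega
      have hprod : ∏ i, w (((c : Fin k → Fin 64) i):ℕ)
          = (1/64:ℝ)^k * (9/10)^(∑ i, En ((c i):ℕ)) := by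
        simp only [w]
        rw [Finset.prod_mul_distrib, Finset.prod_const, Finset.prod_pow_eq_pow_sum,
          Finset.card_univ, Fintype.card_fin]
        ring
      rw [hprod]
      apply mul_le_mul_of_nonneg_left _ (by positivity)
      exact pow_le_pow_of_le_one (by norm_num) (by norm_num) hMle
    calc W^k/2 ≤ ∑ c ∈ Good k, ∏ i, w (((c : Fin k → Fin 64) i):ℕ) := hWk2
      _ ≤ (Good k).card • ((1/64:ℝ)^k * (9/10)^M) := Finset.sum_le_card_nsmul _ _ _ hper
      _ = (((Good k).card):ℝ) * ((1/64:ℝ)^k * (9/10)^M) := nsmul_eq_mul _ _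
  have hC0 : (0:ℝ) < (((Good k).card):ℝ) := by
    by_contra h
    push_neg at h
    have h0 : (((Good k).card):ℝ) = 0 := le_antisymm h (Nat.cast_nonneg _)
    rw [h0, zero_mul] at hcnt
    nlinarith [pow_pos W_pos k]
  -- certificate to k-th power
  have hMc : 227*k ≤ 50*M := by rw [hM]; omega
  have hcert : (3607/5000:ℝ)^k ≤ W^k * (10/9)^M := by
    have h50 : ((3607/5000:ℝ)^k)^50 ≤ (W^k * (10/9)^M)^50 := by
      calc ((3607/5000:ℝ)^k)^50 = ((3607/5000:ℝ)^50)^k := by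
            rw [← pow_mul, ← pow_mul, Nat.mul_comm]
        _ ≤ (W^50 * (10/9)^227)^k := pow_le_pow_left₀ (by positivity) (le_of_lt cert3) k
        _ = W^(50*k) * (10/9)^(227*k) := by
            rw [mul_pow, ← pow_mul, ← pow_mul]
        _ ≤ W^(50*k) * (10/9)^(50*M) := by
            apply mul_le_mul_of_nonneg_left _ (le_of_lt (pow_pos W_pos _))
            exact pow_le_pow_right₀ (by norm_num) hMc
        _ = (W^k * (10/9)^M)^50 := by
            rw [mul_pow, ← pow_mul, ← pow_mul, Nat.mul_comm k 50, Nat.mul_comm M 50]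
    exact le_of_pow_le_pow_left₀ (by norm_num)
      (mul_nonneg (le_of_lt (pow_pos W_pos k)) (by positivity)) h50
  -- final arithmetic
  set N : ℝ := (Y.card:ℝ) with hN
  set C : ℝ := (((Good k).card):ℝ) with hC
  set Q : ℝ := (9/10:ℝ)^M with hQ
  have hQ0 : 0 < Q := by rw [hQ]; positivity
  have hWk0 : (0:ℝ) < W^k := pow_pos W_pos k
  have hN0 : 0 ≤ N := Nat.cast_nonneg _
  have step1 : N*α^k ≤ (1152/25:ℝ)^k / C := by
    rw [le_div_iff₀ hC0]
    have e2 : (s/64 * (1152/25) : ℝ)^k = α^k := by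
      congr 1
      rw [hs]; ring
    calc N*α^k*C = (N*(C*(s/64)^k))*(1152/25)^k := by
          rw [← e2, mul_pow]; ring
      _ ≤ 1*(1152/25)^k :=
          mul_le_mul_of_nonneg_right hreal (by positivity)
      _ = (1152/25)^k := one_mul _
  have step2 : (1152/25:ℝ)^k / C ≤ 2*((18/25:ℝ)^k * Q) / W^k := by
    rw [div_le_div_iff₀ hC0 hWk0]
    have e3 : ((1152/25:ℝ) * (1/64))^k = (18/25:ℝ)^k := by congr 1; norm_num
    calc (1152/25:ℝ)^k * W^k ≤ (1152/25:ℝ)^k * (2*(C*((1/64:ℝ)^k*Q))) := by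
          apply mul_le_mul_of_nonneg_left _ (by positivity)
          rw [hQ, hC]
          linarith [hcnt]
      _ = ((1152/25:ℝ)*(1/64))^k * (2*Q) * C := by rw [mul_pow]; ring
      _ = 2*((18/25:ℝ)^k*Q)*C := by rw [e3]; ring
  have step3 : 2*((18/25:ℝ)^k * Q) / W^k ≤ 2*(3600/3607:ℝ)^k := by
    rw [div_le_iff₀ hWk0]
    have e4 : ((3600/3607:ℝ) * (3607/5000))^k = (18/25:ℝ)^k := by congr 1; norm_num
    have e5 : ((10/9:ℝ)*(9/10))^M = 1 := by norm_num
    calc 2*((18/25:ℝ)^k*Q) = 2*(3600/3607:ℝ)^k*((3607/5000:ℝ)^k*Q) := by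
          rw [← e4, mul_pow]; ring
      _ ≤ 2*(3600/3607:ℝ)^k*((W^k*(10/9)^M)*Q) := by
          apply mul_le_mul_of_nonneg_left _ (by positivity)
          exact mul_le_mul_of_nonneg_right hcert hQ0.le
      _ = 2*(3600/3607:ℝ)^k*W^k*(((10/9:ℝ)*(9/10))^M) := by
          rw [mul_pow, hQ]; ring
      _ = 2*(3600/3607:ℝ)^k*W^k := by rw [e5, mul_one]
  calc N*α^k ≤ (1152/25:ℝ)^k / C := step1
    _ ≤ 2*((18/25:ℝ)^k * Q) / W^k := step2
    _ ≤ 2*(3600/3607:ℝ)^k := step3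



end S15C

end Stmt15Aux

open Stmt15Aux Stmt15Aux.S15 Stmt15Aux.S15B Stmt15Aux.S15C in
/-- There exists `k₀` such that for all `k ≥ k₀`: for every `0 < α < 0.99` and every finite
set `Y ⊆ [0,1]^k` whose points are pairwise at distance greater than `α·√k`, one has
`|Y|·α^k ≤ 0.999^k`. -/
theorem stmt_15 :
    ∃ k0 : ℕ, ∀ k : ℕ, k0 ≤ k →
      ∀ α : ℝ, 0 < α → α < 0.99 →
        ∀ Y : Finset (EuclideanSpace ℝ (Fin k)),
          (∀ y ∈ Y, ∀ i, y i ∈ Set.Icc (0 : ℝ) 1) →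
          (∀ u ∈ Y, ∀ v ∈ Y, u ≠ v → α * Real.sqrt k < dist u v) →
          (Y.card : ℝ) * α ^ k ≤ 0.999 ^ k := by
  obtain ⟨k₂, hk₂pos, hvol⟩ := volume_branch
  obtain ⟨m₃, hm₃⟩ := pow_unbounded_of_one_lt (R := ℝ) 2
    (show (1:ℝ) < 3603393/3600000 by norm_num)
  obtain ⟨m₄, hm₄⟩ := pow_unbounded_of_one_lt (R := ℝ) 29
    (show (1:ℝ) < 111/110 by norm_num)
  refine ⟨max (max k₂ m₃) (max m₄ 1), ?_⟩
  intro k hk α hα0 hα99 Y hcube hdist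
  have hk2 : k₂ ≤ k := le_trans (le_trans (le_max_left _ _) (le_max_left _ _)) hk
  have hk3 : m₃ ≤ k := le_trans (le_trans (le_max_right _ _) (le_max_left _ _)) hk
  have hk4 : m₄ ≤ k := le_trans (le_trans (le_max_left _ _) (le_max_right _ _)) hk
  have hk1 : 1 ≤ k := le_trans (le_trans (le_max_right _ _) (le_max_right _ _)) hk
  have hα99' : α < 99/100 := by
    have : (0.99:ℝ) = 99/100 := by norm_num
    linarith [hα99, this.symm.le]
  rcases le_or_gt α (18/25) with hle | hgt
  · have h := hvol k hk2 α hα0 hle Y hcube hdist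
    have h1 : (2:ℝ) ≤ (3603393/3600000:ℝ)^k :=
      le_trans (le_of_lt hm₃) (pow_le_pow_right₀ (by norm_num) hk3)
    have habs : 2*(3600/3607:ℝ)^k ≤ (0.999:ℝ)^k := by
      calc 2*(3600/3607:ℝ)^k ≤ (3603393/3600000:ℝ)^k * (3600/3607:ℝ)^k :=
            mul_le_mul_of_nonneg_right h1 (by positivity)
        _ = ((3603393/3600000:ℝ)*(3600/3607))^k := (mul_pow _ _ _).symm
        _ = (0.999:ℝ)^k := by norm_num
    linarith
  · have hb := plotkin k (by omega) α hgt (lt_trans hα99 (by norm_num)) Y hcube hdist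
    have hαk : α^k ≤ (99/100:ℝ)^k := pow_le_pow_left₀ hα0.le (le_of_lt hα99') k
    have h1 : (Y.card:ℝ) * α^k ≤ 29 * (99/100:ℝ)^k := by
      have h2 := mul_le_mul hb hαk (by positivity) (by norm_num)
      linarith
    have h3 : (29:ℝ) ≤ (111/110:ℝ)^k :=
      le_trans (le_of_lt hm₄) (pow_le_pow_right₀ (by norm_num) hk4)
    have habs : 29*(99/100:ℝ)^k ≤ (0.999:ℝ)^k := by
      calc 29*(99/100:ℝ)^k ≤ (111/110:ℝ)^k * (99/100:ℝ)^k :=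
            mul_le_mul_of_nonneg_right h3 (by positivity)
        _ = ((111/110:ℝ)*(99/100))^k := (mul_pow _ _ _).symm
        _ = (0.999:ℝ)^k := by norm_num
    linarith
end

section
/- Let k ≥ 3 and let X be a set of n points in the unit cube [0,1]^k ⊂ ℝ^k, where n ≥ 2 is even. Then there exists a perfect matching M of the n points (a partition of X into n/2 unordered pairs) such that Σ_{e ∈ M} |e|^k ≤ (1/3)·3^k·(5k)^{k/2}; equivalently, the scaled cost (Σ_{e ∈ M} |e|^k)^{1/k} is at most 3√5·(1/3)^{1/k}·√k. -/
namespace P16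

set_option linter.unusedVariables false
set_option linter.unnecessarySeqFocus false


def tau (b : Bool) (d : ℕ) : ℕ := if b then 2 - d else d

def cnt (k : ℕ) : ℕ → ℕ → ℕ
  | 0, _ => 0
  | N+1, c => cnt k N c + if N % k = c then 1 else 0

lemma cnt_mono (k c : ℕ) : ∀ {M N : ℕ}, M ≤ N → cnt k M c ≤ cnt k N c := by
  intro M N h
  induction N with
  | zero => simp [Nat.le_zero.mp h, cnt]
  | succ n ih =>
    rcases Nat.lt_or_ge M (n+1) with h' | h'
    · calc cnt k M c ≤ cnt k n c := ih (by omega)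
        _ ≤ cnt k (n+1) c := by simp [cnt]
    · have : M = n + 1 := by omega
      simp [this]

lemma dvd_iff_mod (k N c : ℕ) (hc : c < k) : k ∣ (N + (k - c)) ↔ N % k = c := by
  constructor
  · rintro ⟨q, hq⟩
    rcases q with _ | q'
    · omega
    · rw [Nat.mul_succ] at hq
      have hN : N = k * q' + c := by
        have h2 : 0 ≤ k * q' := Nat.zero_le _
        omega
      rw [hN, Nat.mul_add_mod]
      exact Nat.mod_eq_of_lt hc
  · intro h
    refine ⟨N / k + 1, ?_⟩
    have := Nat.div_add_mod N k
    rw [Nat.mul_add, Nat.mul_one]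
    omega

lemma cnt_closed (k : ℕ) (hk : 0 < k) : ∀ N c, c < k → cnt k N c = (N + (k - 1 - c)) / k := by
  intro N
  induction N with
  | zero =>
    intro c hc
    simp [cnt, Nat.div_eq_of_lt (by omega : k - 1 - c < k)]
  | succ n ih =>
    intro c hc
    have h1 : n + 1 + (k - 1 - c) = (n + (k - 1 - c)) + 1 := by omega
    rw [cnt, ih c hc, h1, Nat.succ_div]
    have h2 : n + (k - 1 - c) + 1 = n + (k - c) := by omega
    rw [h2]
    by_cases h : n % k = c
    · simp [h, (dvd_iff_mod k n c hc).mpr h]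
    · rw [if_neg h, if_neg (fun hd => h ((dvd_iff_mod k n c hc).mp hd))]

lemma cnt_mul (k : ℕ) (hk : 0 < k) (l c : ℕ) (hc : c < k) : cnt k (l * k) c = l := by
  rw [cnt_closed k hk _ c hc, Nat.mul_comm, Nat.mul_add_div hk]
  rw [Nat.div_eq_of_lt (by omega : k - 1 - c < k)]
  omega


def pc (k : ℕ) : ℕ → (ℕ → Bool) → ℕ → ℕ → ℕ
  | 0, _, _, _ => 0
  | N+1, ρ, i, c =>
      pc k N (fun c' => xor (ρ c') (decide (i / 3^N % 2 = 1) && !decide (c' = N % k))) (i % 3^N) c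
        + if c = N % k then tau (ρ c) (i / 3^N) * 3 ^ cnt k N c else 0

lemma tau_le (b : Bool) {d : ℕ} (hd : d ≤ 2) : tau b d ≤ 2 := by
  cases b <;> simp [tau] <;> omega

lemma cnt_succ_self (k N : ℕ) : cnt k (N+1) (N % k) = cnt k N (N % k) + 1 := by
  simp [cnt]

lemma cnt_succ_ne (k N c : ℕ) (hc : ¬ c = N % k) : cnt k (N+1) c = cnt k N c := by
  have h2 : ¬ N % k = c := fun h => hc h.symm
  simp [cnt, h2]

lemma pc_lt (k : ℕ) : ∀ N ρ i c, i < 3^N → pc k N ρ i c < 3 ^ cnt k N c := by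
  intro N
  induction N with
  | zero => intro ρ i c hi; simp [pc, cnt]
  | succ N ih =>
    intro ρ i c hi
    have hd : i / 3^N ≤ 2 := by
      have h3 : 0 < (3:ℕ)^N := Nat.pow_pos (by norm_num)
      have : i / 3^N < 3 := by
        rw [Nat.div_lt_iff_lt_mul h3]
        calc i < 3^(N+1) := hi
          _ = 3 * 3^N := by ring
      omega
    have hr : i % 3^N < 3^N := Nat.mod_lt _ (Nat.pow_pos (by norm_num))
    have hbase := ih (fun c' => xor (ρ c') (decide (i / 3^N % 2 = 1) && !decide (c' = N % k)))
      (i % 3^N) c hr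
    rw [pc]
    by_cases hc : c = N % k
    · subst hc
      rw [if_pos rfl, cnt_succ_self]
      have ht := tau_le (ρ (N % k)) hd
      have h1 : tau (ρ (N % k)) (i / 3^N) * 3 ^ cnt k N (N % k) ≤ 2 * 3 ^ cnt k N (N % k) :=
        Nat.mul_le_mul_right _ ht
      have h2 : 3 ^ (cnt k N (N % k) + 1) = 3 ^ cnt k N (N % k) + 2 * 3 ^ cnt k N (N % k) := by
        ring
      omega
    · rw [if_neg hc, cnt_succ_ne k N c hc]
      omega

lemma pc_zero (k : ℕ) : ∀ N ρ c, pc k N ρ 0 c = if ρ c then 3 ^ cnt k N c - 1 else 0 := by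
  intro N
  induction N with
  | zero => intro ρ c; simp [pc, cnt]
  | succ N ih =>
    intro ρ c
    rw [pc]
    have h0 : (0:ℕ) / 3^N = 0 := Nat.zero_div _
    have h0' : (0:ℕ) % 3^N = 0 := Nat.zero_mod _
    rw [h0, h0']
    have hρ' : (fun c' => xor (ρ c') (decide ((0:ℕ) % 2 = 1) && !decide (c' = N % k))) = ρ := by
      funext c'; simp
    rw [hρ', ih]
    have hpos : 0 < (3:ℕ) ^ cnt k N c := Nat.pow_pos (by norm_num)
    by_cases hc : c = N % k
    · subst hc
      rw [if_pos rfl, cnt_succ_self]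
      cases h : ρ (N % k) <;> simp [h, tau] <;> ring_nf <;> omega
    · rw [if_neg hc, cnt_succ_ne k N c hc]
      cases h : ρ c <;> simp [h]

lemma pc_last (k : ℕ) : ∀ N ρ c, pc k N ρ (3^N - 1) c = if ρ c then 0 else 3 ^ cnt k N c - 1 := by
  intro N
  induction N with
  | zero => intro ρ c; simp [pc, cnt]
  | succ N ih =>
    intro ρ c
    have h3 : 0 < (3:ℕ)^N := Nat.pow_pos (by norm_num)
    have hEq : 3^(N+1) - 1 = 3^N * 2 + (3^N - 1) := by
      have : (3:ℕ)^(N+1) = 3 * 3^N := by ring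
      omega
    have hd : (3^(N+1) - 1) / 3^N = 2 := by
      rw [hEq, Nat.mul_add_div h3, Nat.div_eq_of_lt (by omega)]
    have hr : (3^(N+1) - 1) % 3^N = 3^N - 1 := by
      rw [hEq, Nat.mul_add_mod, Nat.mod_eq_of_lt (by omega)]
    rw [pc, hd, hr]
    have hρ' : (fun c' => xor (ρ c') (decide ((2:ℕ) % 2 = 1) && !decide (c' = N % k))) = ρ := by
      funext c'; simp
    rw [hρ', ih]
    have hpos : 0 < (3:ℕ) ^ cnt k N c := Nat.pow_pos (by norm_num)
    by_cases hc : c = N % k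
    · subst hc
      rw [if_pos rfl, cnt_succ_self]
      cases h : ρ (N % k) <;> simp [h, tau] <;> ring_nf <;> omega
    · rw [if_neg hc, cnt_succ_ne k N c hc]
      cases h : ρ c <;> simp [h]


lemma pc_snake (k : ℕ) (hk : 0 < k) : ∀ N ρ i, i + 1 < 3^N →
    ∃ c0, c0 < k ∧ (∀ c, c ≠ c0 → pc k N ρ (i+1) c = pc k N ρ i c) ∧
      (pc k N ρ (i+1) c0 = pc k N ρ i c0 + 1 ∨ pc k N ρ i c0 = pc k N ρ (i+1) c0 + 1) := by
  intro N
  induction N with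
  | zero => intro ρ i h; simp at h
  | succ N ih =>
    intro ρ i h1
    have h3 : 0 < (3:ℕ)^N := Nat.pow_pos (by norm_num)
    have hdm := Nat.div_add_mod i (3^N)
    have hrlt : i % 3^N < 3^N := Nat.mod_lt _ h3
    by_cases hcase : i % 3^N + 1 < 3^N
    · have hi1 : i + 1 = 3^N * (i / 3^N) + (i % 3^N + 1) := by omega
      have hd1 : (i+1) / 3^N = i / 3^N := by
        rw [hi1, Nat.mul_add_div h3, Nat.div_eq_of_lt hcase, Nat.add_zero]
      have hr1 : (i+1) % 3^N = i % 3^N + 1 := by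
        rw [hi1, Nat.mul_add_mod, Nat.mod_eq_of_lt hcase]
      obtain ⟨c0, hc0k, hoff, hpm⟩ := ih
        (fun c' => xor (ρ c') (decide (i / 3^N % 2 = 1) && !decide (c' = N % k)))
        (i % 3^N) hcase
      refine ⟨c0, hc0k, ?_, ?_⟩
      · intro c hc
        rw [pc, pc, hd1, hr1, hoff c hc]
      · rw [pc, pc, hd1, hr1]
        rcases hpm with h | h
        · left; omega
        · right; omega
    · have hr0 : i % 3^N = 3^N - 1 := by omega
      have hi1 : i + 1 = 3^N * (i / 3^N) + 3^N := by omega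
      have hd1 : (i+1) / 3^N = i / 3^N + 1 := by
        rw [hi1, Nat.mul_add_div h3, Nat.div_self h3]
      have hr1 : (i+1) % 3^N = 0 := by
        rw [hi1, Nat.mul_add_mod, Nat.mod_self]
      have hdle : i / 3^N ≤ 1 := by
        have h31 : (3:ℕ)^(N+1) = 3^N*3 := by ring
        have h2 : 3^N * (i / 3^N) < 3^N * 2 := by omega
        have := Nat.lt_of_mul_lt_mul_left h2
        omega
      refine ⟨N % k, Nat.mod_lt _ hk, ?_, ?_⟩
      · intro c hc
        rw [pc, pc, hd1, hr1, hr0, pc_zero, pc_last, if_neg hc, if_neg hc]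
        have hcd : (!decide (c = N % k)) = true := by simp [hc]
        rcases Nat.le_one_iff_eq_zero_or_eq_one.mp hdle with hd | hd <;>
          · rw [hd]
            cases h : ρ c <;> simp [h, hcd]
      · rw [pc, pc, hd1, hr1, hr0, pc_zero, pc_last, if_pos rfl, if_pos rfl]
        have hcd : (!decide (N % k = N % k)) = false := by simp
        have hpos : 0 < (3:ℕ) ^ cnt k N (N % k) := Nat.pow_pos (by norm_num)
        rcases Nat.le_one_iff_eq_zero_or_eq_one.mp hdle with hd | hd <;>
          · rw [hd]
            cases h : ρ (N % k) <;> simp [h, hcd, tau] <;> omega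


lemma pc_surj (k : ℕ) (hk : 0 < k) : ∀ N ρ (v : ℕ → ℕ), (∀ c, c < k → v c < 3 ^ cnt k N c) →
    ∃ i, i < 3^N ∧ ∀ c, c < k → pc k N ρ i c = v c := by
  intro N
  induction N with
  | zero =>
    intro ρ v hv
    refine ⟨0, by norm_num, ?_⟩
    intro c hc
    have := hv c hc
    simp [cnt] at this
    simp [pc, this]
  | succ N ih =>
    intro ρ v hv
    have h3 : 0 < (3:ℕ)^N := Nat.pow_pos (by norm_num)
    set c0 := N % k with hc0
    have hc0k : c0 < k := Nat.mod_lt _ hk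
    have hpos : 0 < (3:ℕ) ^ cnt k N c0 := Nat.pow_pos (by norm_num)
    obtain ⟨hi, hhi⟩ : ∃ x, x = v c0 / 3 ^ cnt k N c0 := ⟨_, rfl⟩
    obtain ⟨lo, hlo⟩ : ∃ x, x = v c0 % 3 ^ cnt k N c0 := ⟨_, rfl⟩
    have hhi2 : hi < 3 := by
      rw [hhi, Nat.div_lt_iff_lt_mul hpos]
      have := hv c0 hc0k
      rw [cnt_succ_self] at this
      calc v c0 < 3 ^ (cnt k N c0 + 1) := this
        _ = 3 * 3 ^ cnt k N c0 := by ring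
    obtain ⟨d, hd⟩ : ∃ x, x = if ρ c0 then 2 - hi else hi := ⟨_, rfl⟩
    have hd2 : d ≤ 2 := by rw [hd]; cases h : ρ c0 <;> simp [h] <;> omega
    have htau : tau (ρ c0) d = hi := by
      rw [hd, tau]; cases h : ρ c0 <;> simp [h] <;> omega
    obtain ⟨r, hr, hspec⟩ := ih
      (fun c' => xor (ρ c') (decide (d % 2 = 1) && !decide (c' = c0)))
      (Function.update v c0 lo)
      (by
        intro c hc
        by_cases h : c = c0
        · subst h; rw [Function.update_self, hlo]; exact Nat.mod_lt _ hpos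
        · rw [Function.update_of_ne h]
          have := hv c hc
          rwa [cnt_succ_ne k N c h] at this)
    refine ⟨3^N * d + r, ?_, ?_⟩
    · have : (3:ℕ)^(N+1) = 3^N * 2 + 3^N := by ring
      have h2 : 3^N * d ≤ 3^N * 2 := Nat.mul_le_mul_left _ hd2
      omega
    · intro c hc
      have hdiv : (3^N * d + r) / 3^N = d := by
        rw [Nat.mul_add_div h3, Nat.div_eq_of_lt hr, Nat.add_zero]
      have hmod : (3^N * d + r) % 3^N = r := by
        rw [Nat.mul_add_mod, Nat.mod_eq_of_lt hr]
      rw [pc, hdiv, hmod]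
      by_cases h : c = c0
      · rw [if_pos h, hspec c hc, h, Function.update_self, htau]
        rw [hlo, hhi, Nat.mod_add_div' (v c0) (3 ^ cnt k N c0)]
      · rw [if_neg h, hspec c hc, Function.update_of_ne h, Nat.add_zero]

lemma pc_coh (k : ℕ) (hk : 0 < k) : ∀ N M ρ i, M ≤ N → (N - M) % k = 0 → i < 3^N →
    ∀ c, c < k → pc k M ρ (i / 3^(N-M)) c = pc k N ρ i c / 3^(cnt k N c - cnt k M c) := by
  intro N
  induction N with
  | zero =>
    intro M ρ i hMN hmod hi c hc
    have hM : M = 0 := Nat.le_zero.mp hMN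
    subst hM
    simp [pc]
  | succ N ih =>
    intro M ρ i hMN hmod hi c hc
    have h3 : 0 < (3:ℕ)^N := Nat.pow_pos (by norm_num)
    by_cases hM : M = N + 1
    · subst hM
      simp
    have hM' : M ≤ N := by omega
    rcases Nat.eq_zero_or_pos M with hM0 | hM0
    · subst hM0
      have h1 : pc k 0 ρ (i / 3 ^ (N + 1 - 0)) c = 0 := rfl
      rw [h1]
      have h2 : cnt k 0 c = 0 := rfl
      rw [h2, Nat.sub_zero]
      exact (Nat.div_eq_of_lt (pc_lt k (N+1) ρ i c hi)).symm
    obtain ⟨M', rfl⟩ : ∃ M', M = M' + 1 := ⟨M - 1, by omega⟩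
    have hM'N : M' ≤ N := by omega
    have hsub : N + 1 - (M' + 1) = N - M' := by omega
    have halign : M' % k = N % k := by
      have hdvd : k ∣ N - M' := Nat.dvd_of_mod_eq_zero (by rw [← hsub]; exact hmod)
      exact (Nat.modEq_iff_dvd' hM'N).mpr hdvd
    have hrlt : i % 3^N < 3^N := Nat.mod_lt _ h3
    -- top digit identification
    have hjj : i / 3^(N - M') / 3^(M') = i / 3^N := by
      rw [Nat.div_div_eq_div_mul, ← pow_add]
      congr 2
      omega
    have hjm : (i / 3^(N - M')) % 3^(M') = (i % 3^N) / 3^(N - M') := by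
      have h5 : (3:ℕ)^N = 3^(N-M') * 3^(M') := by rw [← pow_add]; congr 1; omega
      rw [h5, Nat.mod_mul_right_div_self]
    have hIH := ih M' (fun c' => xor (ρ c') (decide (i / 3^N % 2 = 1) && !decide (c' = N % k)))
      (i % 3^N) hM'N (by rw [← hsub]; exact hmod) hrlt c hc
    rw [hsub, pc, pc, hjj, hjm, halign]
    by_cases hc1 : c = N % k
    · rw [if_pos hc1, if_pos hc1, hIH]
      have hA := pc_lt k N
        (fun c' => xor (ρ c') (decide (i / 3^N % 2 = 1) && !decide (c' = N % k))) (i % 3^N) c hrlt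
      have hcm : cnt k M' c ≤ cnt k N c := cnt_mono k c hM'N
      have hcnt1 : cnt k (N+1) c = cnt k N c + 1 := by rw [hc1]; exact cnt_succ_self k N
      have hcnt2 : cnt k (M'+1) c = cnt k M' c + 1 := by
        have : c = M' % k := by rw [hc1, halign]
        rw [this]; exact cnt_succ_self k M'
      rw [hcnt1, hcnt2]
      have he : cnt k N c + 1 - (cnt k M' c + 1) = cnt k N c - cnt k M' c := by omega
      rw [he]
      have hsplit : (3:ℕ) ^ cnt k N c = 3 ^ cnt k M' c * 3 ^ (cnt k N c - cnt k M' c) := by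
        rw [← pow_add]; congr 1; omega
      have hepos : 0 < (3:ℕ) ^ (cnt k N c - cnt k M' c) := Nat.pow_pos (by norm_num)
      rw [hsplit, ← Nat.mul_assoc, Nat.add_mul_div_right _ _ hepos]
    · rw [if_neg hc1, if_neg hc1, hIH, Nat.add_zero, Nat.add_zero]
      have hcnt1 : cnt k (N+1) c = cnt k N c := cnt_succ_ne k N c hc1
      have hcnt2 : cnt k (M'+1) c = cnt k M' c := by
        refine cnt_succ_ne k M' c ?_
        rw [halign]; exact hc1
      rw [hcnt1, hcnt2]




lemma div_close {a b M e : ℕ} (hM : 0 < M) (h : a / M ≤ b / M + e) : a < b + (e+1) * M := by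
  have h1 := Nat.div_add_mod a M
  have h2 := Nat.div_add_mod b M
  have h3 : a % M < M := Nat.mod_lt _ hM
  have h4 : M * (a / M) ≤ M * (b / M + e) := Nat.mul_le_mul_left _ h
  have h5 : M * (b / M + e) = M * (b / M) + M * e := by ring
  have h6 : (e+1) * M = M * e + M := by ring
  omega

lemma cell_bounds (L : ℕ) (a : ℝ) (ha : a ∈ Set.Icc (0:ℝ) 1) :
    ((min ⌊(3:ℝ)^L * a⌋₊ (3^L - 1) : ℕ) : ℝ) ≤ 3^L * a ∧
    3^L * a ≤ (min ⌊(3:ℝ)^L * a⌋₊ (3^L - 1) : ℕ) + 1 := by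
  obtain ⟨ha0, ha1⟩ := ha
  have hpos : (0:ℝ) ≤ 3^L * a := by positivity
  have h3 : (1:ℕ) ≤ 3^L := Nat.one_le_pow _ _ (by norm_num)
  rcases le_or_gt (⌊(3:ℝ)^L * a⌋₊) (3^L - 1) with h | h
  · rw [min_eq_left h]
    exact ⟨Nat.floor_le hpos, le_of_lt (Nat.lt_floor_add_one _)⟩
  · rw [min_eq_right (le_of_lt h)]
    constructor
    · have h2 : ((3:ℕ)^L : ℝ) ≤ 3^L * a := by
        have : (3^L : ℕ) ≤ ⌊(3:ℝ)^L * a⌋₊ := by omega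
        have := (Nat.le_floor_iff hpos).mp this
        calc ((3:ℕ)^L : ℝ) = ((3:ℕ)^L : ℕ) := by norm_num
          _ ≤ 3^L * a := by push_cast at this ⊢; linarith
      have hc : ((3^L - 1 : ℕ) : ℝ) ≤ ((3^L : ℕ) : ℝ) := by
        push_cast [Nat.cast_sub h3]; norm_num
      calc ((3^L - 1 : ℕ) : ℝ) ≤ ((3^L : ℕ) : ℝ) := hc
        _ ≤ 3^L * a := by push_cast at h2 ⊢; linarith
    · have : 3^L * a ≤ 3^L * 1 := by
        apply mul_le_mul_of_nonneg_left ha1 (by positivity)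
      rw [Nat.cast_sub h3]
      push_cast
      linarith

lemma dist_le_of_cells (k L s : ℕ) (x y : EuclideanSpace ℝ (Fin k))
    (cx cy : ℕ → ℕ)
    (hx : ∀ c : Fin k, ((cx c : ℕ) : ℝ) ≤ 3^L * x c ∧ 3^L * x c ≤ (cx c : ℕ) + 1)
    (hy : ∀ c : Fin k, ((cy c : ℕ) : ℝ) ≤ 3^L * y c ∧ 3^L * y c ≤ (cy c : ℕ) + 1)
    (c0 : Fin k)
    (hoff : ∀ c : Fin k, c ≠ c0 → cx c < cy c + 3^s ∧ cy c < cx c + 3^s)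
    (hc0 : cx c0 < cy c0 + 2*3^s ∧ cy c0 < cx c0 + 2*3^s) :
    dist x y ≤ Real.sqrt (k+3) * 3^s / 3^L := by
  have h3L : (0:ℝ) < 3^L := by positivity
  have key : ∀ c : Fin k, ∀ q : ℕ, cx c < cy c + q*3^s → cy c < cx c + q*3^s →
      (x c - y c)^2 ≤ (q*3^s/3^L)^2 := by
    intro c q hq1 hq2
    have hb1 : 3^L * x c - 3^L * y c ≤ (q*3^s : ℕ) := by
      have := (hx c).2
      have := (hy c).1
      have hcast : ((cx c : ℕ) : ℝ) + 1 ≤ ((cy c : ℕ) : ℝ) + (q*3^s : ℕ) := by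
        have : cx c + 1 ≤ cy c + q*3^s := hq1
        exact_mod_cast this
      push_cast at hcast ⊢
      linarith [(hx c).2, (hy c).1]
    have hb2 : 3^L * y c - 3^L * x c ≤ (q*3^s : ℕ) := by
      have hcast : ((cy c : ℕ) : ℝ) + 1 ≤ ((cx c : ℕ) : ℝ) + (q*3^s : ℕ) := by
        have : cy c + 1 ≤ cx c + q*3^s := hq2
        exact_mod_cast this
      push_cast at hcast ⊢
      linarith [(hy c).2, (hx c).1]
    have hq3 : |x c - y c| ≤ (q*3^s : ℕ) / 3^L := by
      rw [abs_le]
      constructor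
      · rw [neg_le, neg_sub, le_div_iff₀ h3L]
        nlinarith [hb2]
      · rw [le_div_iff₀ h3L]
        nlinarith [hb1]
    calc (x c - y c)^2 = |x c - y c|^2 := (sq_abs _).symm
      _ ≤ ((q*3^s : ℕ) / 3^L)^2 := by
          apply pow_le_pow_left₀ (abs_nonneg _) hq3
      _ = (q*3^s/3^L)^2 := by push_cast; ring
  have hsum : ∑ c : Fin k, (x c - y c)^2 ≤ (k+3) * (3^s/3^L)^2 := by
    have hb : ∀ c : Fin k, (x c - y c)^2 ≤ (3^s/3^L)^2 + (if c = c0 then 3*(3^s/3^L)^2 else 0) := by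
      intro c
      by_cases h : c = c0
      · subst h
        have hk2 := key c 2 hc0.1 hc0.2
        simp only [if_pos rfl]
        calc (x c - y c)^2 ≤ ((2:ℕ)*3^s/3^L)^2 := hk2
          _ = (3^s/3^L)^2 + 3*(3^s/3^L)^2 := by push_cast; ring
      · have := key c 1 (by simpa using (hoff c h).1) (by simpa using (hoff c h).2)
        simp only [if_neg h, add_zero]
        calc (x c - y c)^2 ≤ ((1:ℕ)*3^s/3^L)^2 := this
          _ = (3^s/3^L)^2 := by push_cast; ring
    calc ∑ c : Fin k, (x c - y c)^2
        ≤ ∑ c : Fin k, ((3^s/3^L)^2 + (if c = c0 then 3*(3^s/3^L)^2 else 0)) :=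
          Finset.sum_le_sum (fun c _ => hb c)
      _ = k * (3^s/3^L)^2 + 3*(3^s/3^L)^2 := by
          rw [Finset.sum_add_distrib, Finset.sum_const, Finset.sum_ite_eq' Finset.univ c0]
          simp [Finset.card_univ]
      _ = (k+3) * (3^s/3^L)^2 := by ring
  rw [EuclideanSpace.dist_eq]
  simp only [Real.dist_eq, sq_abs]
  have hnn : (0:ℝ) ≤ (3^s/3^L) := by positivity
  calc Real.sqrt (∑ c : Fin k, (x c - y c)^2)
      ≤ Real.sqrt ((k+3) * (3^s/3^L)^2) := Real.sqrt_le_sqrt hsum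
    _ = Real.sqrt (k+3) * (3^s/3^L) := by
        rw [Real.sqrt_mul (by positivity), Real.sqrt_sq hnn]
    _ = Real.sqrt (k+3) * 3^s / 3^L := by ring




lemma sum_pair_split (g : ℕ → ℝ) : ∀ h : ℕ,
    ∑ p ∈ Finset.range (2*h), g p = ∑ m ∈ Finset.range h, (g (2*m) + g (2*m+1)) := by
  intro h
  induction h with
  | zero => simp
  | succ h ih =>
    have h1 : 2*(h+1) = (2*h) + 1 + 1 := by ring
    rw [h1, Finset.sum_range_succ, Finset.sum_range_succ, ih, Finset.sum_range_succ]
    ring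

lemma telescope (n : ℕ) (K : ℕ → ℕ) (mono : ∀ a b, a ≤ b → b < n → K a ≤ K b) :
    ∀ h, 2*h ≤ n → (∑ m ∈ Finset.range h, (K (2*m+1) - K (2*m))) ≤ K (2*h-1) := by
  intro h
  induction h with
  | zero => simp
  | succ h ih =>
    intro hn
    rw [Finset.sum_range_succ]
    have h1 := ih (by omega)
    have h2 : K (2*h-1) ≤ K (2*h) := mono _ _ (by omega) (by omega)
    have h3 : K (2*h) ≤ K (2*h+1) := mono _ _ (by omega) (by omega)
    have h4 : 2*(h+1)-1 = 2*h+1 := by omega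
    rw [h4]
    omega

lemma nine_le (k : ℕ) (hk : 3 ≤ k) : 9*(k+3)^k ≤ (5*k)^k := by
  by_cases h : k = 3
  · subst h; norm_num
  · have hk4 : 4 ≤ k := by omega
    calc 9*(k+3)^k ≤ 2^k*(k+3)^k := by
          have : (9:ℕ) ≤ 2^k := by
            calc (9:ℕ) ≤ 2^4 := by norm_num
              _ ≤ 2^k := Nat.pow_le_pow_right (by norm_num) hk4
          exact Nat.mul_le_mul_right _ this
      _ = (2*(k+3))^k := (mul_pow _ _ _).symm
      _ ≤ (5*k)^k := Nat.pow_le_pow_left (by omega) k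



lemma sqrt_pow' (a : ℝ) (h : 0 ≤ a) (n : ℕ) : Real.sqrt (a^n) = Real.sqrt a ^ n := by
  rw [← Real.sqrt_sq (pow_nonneg (Real.sqrt_nonneg a) n)]
  congr 1
  rw [← pow_mul, mul_comm n 2, pow_mul, Real.sq_sqrt h]



end P16

open P16 in
/-- For `k ≥ 3` and a set `X` of `n` points in `[0,1]^k` with `n ≥ 2` even, there is a
perfect matching `M` of `X` (encoded as a fixed-point-free involution `φ` of `X`, so that
`∑_{e ∈ M} |e|^k = (1/2)∑_{x ∈ X} |x - φ(x)|^k`) with cost at most `(1/3)·3^k·(5k)^{k/2}`. -/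
theorem stmt_16 (k : ℕ) (hk : 3 ≤ k)
    (X : Finset (EuclideanSpace ℝ (Fin k))) (hX : 2 ≤ X.card) (heven : Even X.card)
    (hcube : ∀ x ∈ X, ∀ i, x i ∈ Set.Icc (0 : ℝ) 1) :
    ∃ φ : ↥X → ↥X, Function.Involutive φ ∧ (∀ x, φ x ≠ x) ∧
      (1 / 2 : ℝ) * ∑ x : ↥X, dist (x : EuclideanSpace ℝ (Fin k)) (φ x : EuclideanSpace ℝ (Fin k)) ^ k ≤
        (1 / 3 : ℝ) * 3 ^ k * Real.sqrt (5 * k) ^ k := by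
  classical
  have hk0 : 0 < k := by omega
  -- minimum distance
  have hod : X.offDiag.Nonempty := by
    obtain ⟨x, hx, y, hy, hxy⟩ := Finset.one_lt_card.mp (by omega : 1 < X.card)
    exact ⟨(x, y), Finset.mem_offDiag.mpr ⟨hx, hy, hxy⟩⟩
  obtain ⟨δ, hδpos, hδle⟩ : ∃ δ : ℝ, 0 < δ ∧
      ∀ x ∈ X, ∀ y ∈ X, x ≠ y → δ ≤ dist x y := by
    obtain ⟨b, hbmem, hbmin⟩ := Finset.exists_min_image X.offDiag (fun p => dist p.1 p.2) hod
    obtain ⟨-, -, hbne⟩ := Finset.mem_offDiag.mp hbmem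
    refine ⟨dist b.1 b.2, dist_pos.mpr hbne, ?_⟩
    intro x hx y hy hne
    exact hbmin (x, y) (Finset.mem_offDiag.mpr ⟨hx, hy, hne⟩)
  -- choose L
  obtain ⟨L, hL⟩ : ∃ L : ℕ, Real.sqrt (k+3) / δ < 3^L :=
    pow_unbounded_of_one_lt _ (by norm_num : (1:ℝ) < 3)
  have h3L : (0:ℝ) < 3^L := by positivity
  have hLδ : Real.sqrt (k+3) / 3^L < δ := by
    rw [div_lt_iff₀ h3L]
    rw [div_lt_iff₀ hδpos] at hL
    linarith [hL]
  -- the cell map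
  obtain ⟨cell, hcelllt, hcellb⟩ : ∃ cell : EuclideanSpace ℝ (Fin k) → ℕ → ℕ,
      (∀ x c, c < k → cell x c < 3^L) ∧
      (∀ x ∈ X, ∀ c : Fin k,
        ((cell x ↑c : ℕ) : ℝ) ≤ 3^L * x c ∧ 3^L * x c ≤ (cell x ↑c : ℕ) + 1) := by
    refine ⟨fun x c => if h : c < k then min ⌊(3:ℝ)^L * x ⟨c, h⟩⌋₊ (3^L - 1) else 0, ?_, ?_⟩
    · intro x c hc
      simp only [dif_pos hc]
      have h1 : (1:ℕ) ≤ 3^L := Nat.one_le_pow _ _ (by norm_num)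
      have := min_le_right (⌊(3:ℝ)^L * x ⟨c, hc⟩⌋₊) (3^L - 1)
      omega
    · intro x hx c
      have hc := c.2
      have := cell_bounds L (x c) (hcube x hx c)
      simp only [dif_pos hc, Fin.eta]
      exact this
  -- keys
  obtain ⟨key, hkeylt, hkeypc⟩ : ∃ key : EuclideanSpace ℝ (Fin k) → ℕ,
      (∀ x, key x < 3^(L*k)) ∧
      (∀ x, ∀ c, c < k → pc k (L*k) (fun _ => false) (key x) c = cell x c) := by
    have hkeyex : ∀ x : EuclideanSpace ℝ (Fin k),
        ∃ i, i < 3^(L*k) ∧ ∀ c, c < k → pc k (L*k) (fun _ => false) i c = cell x c := by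
      intro x
      apply pc_surj k hk0 (L*k) (fun _ => false) (cell x)
      intro c hc
      rw [cnt_mul k hk0 L c hc]
      exact hcelllt x c hc
    exact ⟨fun x => (hkeyex x).choose, fun x => (hkeyex x).choose_spec.1,
      fun x => (hkeyex x).choose_spec.2⟩
  -- injectivity of key on X
  have hcellinj : ∀ x ∈ X, ∀ y ∈ X, (∀ c, c < k → cell x c = cell y c) → x = y := by
    intro x hx y hy hc
    by_contra hne
    have hdd : dist x y ≤ Real.sqrt (k+3) * 3^0 / 3^L := by
      apply dist_le_of_cells k L 0 x y (cell x) (cell y) (hcellb x hx) (hcellb y hy) ⟨0, hk0⟩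
      · intro c _
        rw [hc c c.2]
        omega
      · have h0 : ((⟨0, hk0⟩ : Fin k) : ℕ) = 0 := rfl
        rw [h0, hc 0 hk0]
        omega
    have := hδle x hx y hy hne
    simp only [pow_zero, mul_one] at hdd
    linarith [hLδ]
  have hkeyinj : ∀ x ∈ X, ∀ y ∈ X, key x = key y → x = y := by
    intro x hx y hy hxy
    apply hcellinj x hx y hy
    intro c hc
    rw [← hkeypc x c hc, ← hkeypc y c hc, hxy]
  -- order structure : enumeration of X in increasing key order
  obtain ⟨e, K, hKe, hKlt, hKmono⟩ : ∃ (e : Fin X.card ≃ ↥X) (K : ℕ → ℕ),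
      (∀ (p : Fin X.card), key ((e p : ↥X) : EuclideanSpace ℝ (Fin k)) = K (p : ℕ)) ∧
      (∀ p, p < X.card → K p < 3^(L*k)) ∧
      (∀ a b, a < b → b < X.card → K a < K b) := by
    have hYcard : (X.image key).card = X.card :=
      Finset.card_image_of_injOn (fun x hx y hy h => hkeyinj x hx y hy h)
    have oy : Fin X.card ≃o ↥(X.image key) := (X.image key).orderIsoOfFin hYcard
    have humem : ∀ y : ↥(X.image key), ∃ x ∈ X, key x = (y : ℕ) :=
      fun y => Finset.mem_image.mp y.2
    have hubij : Function.Bijective (fun y : ↥(X.image key) =>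
        (⟨(humem y).choose, (humem y).choose_spec.1⟩ : ↥X)) := by
      constructor
      · intro a b hab
        have h1 : key (humem a).choose = (a : ℕ) := (humem a).choose_spec.2
        have h2 : key (humem b).choose = (b : ℕ) := (humem b).choose_spec.2
        apply Subtype.ext
        rw [← h1, ← h2]
        exact congrArg (fun z : ↥X => key (z : EuclideanSpace ℝ (Fin k))) hab
      · intro a
        have hmem : key (a : EuclideanSpace ℝ (Fin k)) ∈ X.image key :=
          Finset.mem_image_of_mem key a.2
        refine ⟨⟨key (a : EuclideanSpace ℝ (Fin k)), hmem⟩, ?_⟩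
        apply Subtype.ext
        apply hkeyinj _ (humem _).choose_spec.1 _ a.2
        exact (humem _).choose_spec.2
    refine ⟨oy.toEquiv.trans (Equiv.ofBijective _ hubij),
      fun p => if h : p < X.card then (oy ⟨p, h⟩ : ℕ) else 3^(L*k), ?_, ?_, ?_⟩
    · intro p
      simp only [dif_pos p.2]
      exact (humem (oy ⟨(p : ℕ), p.2⟩)).choose_spec.2
    · intro p h
      simp only [dif_pos h]
      have hmem := (oy ⟨p, h⟩).2
      obtain ⟨x, hx, hkx⟩ := Finset.mem_image.mp hmem
      rw [← hkx]
      exact hkeylt x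
    · intro a b hab hbn
      simp only [dif_pos (by omega : a < X.card), dif_pos hbn]
      have h1 : (⟨a, by omega⟩ : Fin X.card) < ⟨b, hbn⟩ := by
        rw [Fin.mk_lt_mk]; exact hab
      exact Subtype.coe_lt_coe.mpr (oy.lt_iff_lt.mpr h1)
  -- the per-pair geometric bound
  have hpair : ∀ (p q : Fin X.card), (p : ℕ) < (q : ℕ) →
      dist ((e p : ↥X) : EuclideanSpace ℝ (Fin k)) ((e q : ↥X) : EuclideanSpace ℝ (Fin k)) ^ k
          * 3^(L*k)
        ≤ Real.sqrt (k+3)^k * 3^k * ((K (q : ℕ) - K (p : ℕ) : ℕ) : ℝ) := by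
    intro p q hpq
    have hxX : ((e p : ↥X) : EuclideanSpace ℝ (Fin k)) ∈ X := (e p).2
    have hyX : ((e q : ↥X) : EuclideanSpace ℝ (Fin k)) ∈ X := (e q).2
    obtain ⟨x, hxmem, hxkey, hxe⟩ : ∃ x, x ∈ X ∧ key x = K (p : ℕ) ∧
        x = ((e p : ↥X) : EuclideanSpace ℝ (Fin k)) := ⟨_, hxX, hKe p, rfl⟩
    obtain ⟨y, hymem, hykey, hye⟩ : ∃ y, y ∈ X ∧ key y = K (q : ℕ) ∧
        y = ((e q : ↥X) : EuclideanSpace ℝ (Fin k)) := ⟨_, hyX, hKe q, rfl⟩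
    rw [← hxe, ← hye]
    have hij : K (p : ℕ) < K (q : ℕ) := hKmono _ _ hpq q.2
    have hjN : K (q : ℕ) < 3^(L*k) := hKlt _ q.2
    obtain ⟨i, hi⟩ : ∃ i, i = K (p : ℕ) := ⟨_, rfl⟩
    obtain ⟨j, hj⟩ : ∃ j, j = K (q : ℕ) := ⟨_, rfl⟩
    rw [← hi] at hxkey hij
    rw [← hj] at hykey hij hjN
    -- find the scale s
    have hfind : ∃ s, j - i < 3^(s*k) := ⟨L, by omega⟩
    obtain ⟨s, hs, hsmin⟩ : ∃ s, (j - i < 3^(s*k)) ∧ ∀ m, m < s → ¬ (j - i < 3^(m*k)) :=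
      ⟨Nat.find hfind, Nat.find_spec hfind, fun m hm => Nat.find_min hfind hm⟩
    have hsL : s ≤ L := by
      by_contra hcon
      exact hsmin L (by omega) (by omega)
    have hs0 : s ≠ 0 := by
      intro h0
      rw [h0] at hs
      simp at hs
      omega
    have hmin : 3^((s-1)*k) ≤ j - i := not_lt.mp (hsmin (s-1) (by omega))
    have hBpos : 0 < (3:ℕ)^(s*k) := Nat.pow_pos (by norm_num)
    have hbj : j / 3^(s*k) ≤ i / 3^(s*k) + 1 := by
      have h1 : j ≤ i + 3^(s*k) := by omega
      calc j / 3^(s*k) ≤ (i + 3^(s*k)) / 3^(s*k) := Nat.div_le_div_right h1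
        _ = i / 3^(s*k) + 1 := Nat.add_div_right _ hBpos
    have hbi : i / 3^(s*k) ≤ j / 3^(s*k) := Nat.div_le_div_right (by omega)
    -- coherence: coarse cells
    have hMN : (L-s)*k ≤ L*k := Nat.mul_le_mul_right _ (by omega)
    have haux : (L-s)*k + s*k = L*k := by rw [← Nat.add_mul]; congr 1; omega
    have hNM : L*k - (L-s)*k = s*k := by omega
    have hmodk : (L*k - (L-s)*k) % k = 0 := by rw [hNM]; exact Nat.mul_mod_left s k
    have hcnt : ∀ c, c < k → cnt k (L*k) c - cnt k ((L-s)*k) c = s := by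
      intro c hc
      rw [cnt_mul k hk0 L c hc, cnt_mul k hk0 (L-s) c hc]
      omega
    have hcohx : ∀ c, c < k → pc k ((L-s)*k) (fun _ => false) (i / 3^(s*k)) c
        = cell x c / 3^s := by
      intro c hc
      have hh := pc_coh k hk0 (L*k) ((L-s)*k) (fun _ => false) i hMN hmodk (by omega) c hc
      rw [hNM, hcnt c hc] at hh
      rw [hh, ← hxkey, hkeypc x c hc]
    have hcohy : ∀ c, c < k → pc k ((L-s)*k) (fun _ => false) (j / 3^(s*k)) c
        = cell y c / 3^s := by
      intro c hc
      have hh := pc_coh k hk0 (L*k) ((L-s)*k) (fun _ => false) j hMN hmodk (by omega) c hc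
      rw [hNM, hcnt c hc] at hh
      rw [hh, ← hykey, hkeypc y c hc]
    have h3spos : 0 < (3:ℕ)^s := Nat.pow_pos (by norm_num)
    -- main distance bound
    have hdist : dist x y ≤ Real.sqrt (k+3) * 3^s / 3^L := by
      have hclose : ∀ c : Fin k, cell x ↑c / 3^s = cell y ↑c / 3^s →
          cell x ↑c < cell y ↑c + 3^s ∧ cell y ↑c < cell x ↑c + 3^s := by
        intro c hcc
        constructor
        · have := div_close (a := cell x ↑c) (b := cell y ↑c) (e := 0) h3spos (by omega)
          omega
        · have := div_close (a := cell y ↑c) (b := cell x ↑c) (e := 0) h3spos (by omega)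
          omega
      rcases (by omega : j / 3^(s*k) = i / 3^(s*k) ∨ j / 3^(s*k) = i / 3^(s*k) + 1) with hbb | hbb
      · -- same coarse block
        have hcc : ∀ c : Fin k, cell x ↑c / 3^s = cell y ↑c / 3^s := by
          intro c
          rw [← hcohx ↑c c.2, ← hcohy ↑c c.2, hbb]
        apply dist_le_of_cells k L s x y (cell x) (cell y) (hcellb x hxmem) (hcellb y hymem)
          ⟨0, hk0⟩
        · intro c _
          exact hclose c (hcc c)
        · have := hclose ⟨0, hk0⟩ (hcc ⟨0, hk0⟩)
          omega
      · -- adjacent coarse blocks: snake lemma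
        have hblt : i / 3^(s*k) + 1 < 3^((L-s)*k) := by
          rw [← hbb]
          rw [Nat.div_lt_iff_lt_mul hBpos, ← pow_add, haux]
          exact hjN
        obtain ⟨c0n, hc0nk, hoffn, hpmn⟩ :=
          pc_snake k hk0 ((L-s)*k) (fun _ => false) (i / 3^(s*k)) hblt
        apply dist_le_of_cells k L s x y (cell x) (cell y) (hcellb x hxmem) (hcellb y hymem)
          ⟨c0n, hc0nk⟩
        · intro c hc
          have hcne : (c : ℕ) ≠ c0n := by
            intro hcc
            apply hc
            apply Fin.ext
            exact hcc
          have h1 := hoffn ↑c hcne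
          rw [← hbb] at h1
          apply hclose c
          rw [← hcohx ↑c c.2, ← hcohy ↑c c.2, h1]
        · have hxc := hcohx c0n hc0nk
          have hyc := hcohy c0n hc0nk
          rw [← hbb] at hpmn
          have hvx : ((⟨c0n, hc0nk⟩ : Fin k) : ℕ) = c0n := rfl
          rw [hvx]
          rcases hpmn with h1 | h1
          · have hdx : cell y c0n / 3^s = cell x c0n / 3^s + 1 := by
              rw [← hxc, ← hyc, h1]
            constructor
            · have := div_close (a := cell x c0n) (b := cell y c0n) (e := 1) h3spos (by omega)
              omega
            · have := div_close (a := cell y c0n) (b := cell x c0n) (e := 1) h3spos (by omega)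
              omega
          · have hdx : cell x c0n / 3^s = cell y c0n / 3^s + 1 := by
              rw [← hxc, ← hyc, h1]
            constructor
            · have := div_close (a := cell x c0n) (b := cell y c0n) (e := 1) h3spos (by omega)
              omega
            · have := div_close (a := cell y c0n) (b := cell x c0n) (e := 1) h3spos (by omega)
              omega
    -- convert to the k-th power bound
    have hd0 : (0:ℝ) ≤ dist x y := dist_nonneg
    have hrhs0 : (0:ℝ) ≤ Real.sqrt (k+3) * 3^s / 3^L := by positivity
    have hpow : dist x y ^ k ≤ (Real.sqrt (k+3))^k * 3^(s*k) / 3^(L*k) := by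
      calc dist x y ^ k ≤ (Real.sqrt (k+3) * 3^s / 3^L)^k := pow_le_pow_left₀ hd0 hdist k
        _ = (Real.sqrt (k+3))^k * 3^(s*k) / 3^(L*k) := by
            rw [div_pow, mul_pow, ← pow_mul, ← pow_mul]
    have h3Lk : (0:ℝ) < 3^(L*k) := by positivity
    have hcast : ((3:ℝ))^(s*k) ≤ 3^k * ((j - i : ℕ) : ℝ) := by
      have h1 : s*k = k + (s-1)*k := by
        have : s - 1 + 1 = s := by omega
        calc s*k = ((s-1)+1)*k := by rw [this]
          _ = k + (s-1)*k := by ring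
      rw [h1, pow_add]
      have h2 : ((3:ℝ))^((s-1)*k) ≤ ((j - i : ℕ) : ℝ) := by
        have := hmin
        calc ((3:ℝ))^((s-1)*k) = (((3:ℕ)^((s-1)*k) : ℕ) : ℝ) := by push_cast; ring
          _ ≤ ((j - i : ℕ) : ℝ) := Nat.cast_le.mpr hmin
      have h3 : (0:ℝ) ≤ 3^k := by positivity
      exact mul_le_mul_of_nonneg_left h2 h3
    calc dist x y ^ k * 3^(L*k)
        ≤ ((Real.sqrt (k+3))^k * 3^(s*k) / 3^(L*k)) * 3^(L*k) := by
          apply mul_le_mul_of_nonneg_right hpow (le_of_lt h3Lk)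
      _ = (Real.sqrt (k+3))^k * 3^(s*k) := by field_simp
      _ ≤ (Real.sqrt (k+3))^k * (3^k * ((j - i : ℕ) : ℝ)) := by
          apply mul_le_mul_of_nonneg_left hcast (by positivity)
      _ = Real.sqrt (k+3)^k * 3^k * ((K (q:ℕ) - K (p:ℕ) : ℕ) : ℝ) := by
          rw [hi, hj]; ring
  -- pairing involution on indices
  have hnev : X.card % 2 = 0 := Nat.even_iff.mp heven
  obtain ⟨ixf, hixinv, hixne, hixval⟩ : ∃ ixf : Fin X.card → Fin X.card,
      (∀ p, ixf (ixf p) = p) ∧ (∀ p, ixf p ≠ p) ∧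
      (∀ p : Fin X.card, ((p:ℕ) % 2 = 0 ∧ ((ixf p) : ℕ) = (p:ℕ) + 1) ∨
        ((p:ℕ) % 2 = 1 ∧ ((ixf p) : ℕ) + 1 = (p:ℕ))) := by
    have hbound : ∀ p : Fin X.card,
        (if (p:ℕ) % 2 = 0 then (p:ℕ) + 1 else (p:ℕ) - 1) < X.card := by
      intro p
      have := p.2
      split <;> omega
    refine ⟨fun p => ⟨if (p:ℕ) % 2 = 0 then (p:ℕ) + 1 else (p:ℕ) - 1, hbound p⟩, ?_, ?_, ?_⟩
    · intro p
      apply Fin.ext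
      show (if (if (p:ℕ) % 2 = 0 then (p:ℕ) + 1 else (p:ℕ) - 1) % 2 = 0
        then (if (p:ℕ) % 2 = 0 then (p:ℕ) + 1 else (p:ℕ) - 1) + 1
        else (if (p:ℕ) % 2 = 0 then (p:ℕ) + 1 else (p:ℕ) - 1) - 1) = (p:ℕ)
      split_ifs <;> omega
    · intro p hcon
      have h1 : ((if (p:ℕ) % 2 = 0 then (p:ℕ) + 1 else (p:ℕ) - 1)) = (p:ℕ) :=
        congrArg (fun z : Fin X.card => (z : ℕ)) hcon
      split_ifs at h1 <;> omega
    · intro p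
      by_cases h : (p:ℕ) % 2 = 0
      · exact Or.inl ⟨h, by simp only [if_pos h]⟩
      · refine Or.inr ⟨by omega, ?_⟩
        show (if (p:ℕ) % 2 = 0 then (p:ℕ) + 1 else (p:ℕ) - 1) + 1 = (p:ℕ)
        rw [if_neg h]
        omega
  refine ⟨fun a => e (ixf (e.symm a)), ?_, ?_, ?_⟩
  · intro a
    simp only [Equiv.symm_apply_apply, hixinv, Equiv.apply_symm_apply]
  · intro a hcon
    apply hixne (e.symm a)
    have := congrArg e.symm hcon
    simpa using this
  -- cost bound
  have h3N : (0:ℝ) < 3^(L*k) := by positivity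
  have hsum1 : ∑ a : ↥X, dist (a : EuclideanSpace ℝ (Fin k))
        ((e (ixf (e.symm a)) : ↥X) : EuclideanSpace ℝ (Fin k)) ^ k
      = ∑ p : Fin X.card, dist ((e p : ↥X) : EuclideanSpace ℝ (Fin k))
        ((e (ixf p) : ↥X) : EuclideanSpace ℝ (Fin k)) ^ k := by
    rw [← Equiv.sum_comp e (fun a : ↥X => dist (a : EuclideanSpace ℝ (Fin k))
      ((e (ixf (e.symm a)) : ↥X) : EuclideanSpace ℝ (Fin k)) ^ k)]
    apply Finset.sum_congr rfl
    intro p _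
    rw [Equiv.symm_apply_apply]
  have hsum2 : ∑ p : Fin X.card, dist ((e p : ↥X) : EuclideanSpace ℝ (Fin k))
        ((e (ixf p) : ↥X) : EuclideanSpace ℝ (Fin k)) ^ k
      = ∑ m ∈ Finset.range X.card, (fun m => if h : m < X.card then
          dist ((e ⟨m, h⟩ : ↥X) : EuclideanSpace ℝ (Fin k))
          ((e (ixf ⟨m, h⟩) : ↥X) : EuclideanSpace ℝ (Fin k)) ^ k else 0) m := by
    rw [← Fin.sum_univ_eq_sum_range]
    apply Finset.sum_congr rfl
    intro p _
    simp only [dif_pos p.2, Fin.eta]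
  have hFb : ∀ m ∈ Finset.range X.card, (fun m => if h : m < X.card then
          dist ((e ⟨m, h⟩ : ↥X) : EuclideanSpace ℝ (Fin k))
          ((e (ixf ⟨m, h⟩) : ↥X) : EuclideanSpace ℝ (Fin k)) ^ k else 0) m
      ≤ (Real.sqrt (k+3)^k * 3^k / 3^(L*k)) *
          ((K (2*(m/2)+1) - K (2*(m/2)) : ℕ) : ℝ) := by
    intro m hm
    have hmn : m < X.card := Finset.mem_range.mp hm
    simp only [dif_pos hmn]
    have hmm : ((⟨m, hmn⟩ : Fin X.card) : ℕ) = m := rfl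
    rcases hixval ⟨m, hmn⟩ with ⟨hpar, hval⟩ | ⟨hpar, hval⟩ <;> rw [hmm] at hpar hval
    · -- m even, partner is m+1
      have hlt : ((⟨m, hmn⟩ : Fin X.card) : ℕ) < ((ixf ⟨m, hmn⟩) : ℕ) := by
        rw [hmm, hval]; omega
      have hp := hpair ⟨m, hmn⟩ (ixf ⟨m, hmn⟩) hlt
      rw [hval] at hp
      have hidx1 : 2*(m/2) = m := by omega
      have hidx2 : 2*(m/2)+1 = m + 1 := by omega
      rw [hidx2, hidx1]
      rw [div_mul_eq_mul_div, le_div_iff₀ h3N]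
      calc dist ((e ⟨m, hmn⟩ : ↥X) : EuclideanSpace ℝ (Fin k))
            ((e (ixf ⟨m, hmn⟩) : ↥X) : EuclideanSpace ℝ (Fin k)) ^ k * 3^(L*k)
          ≤ Real.sqrt (k+3)^k * 3^k * ((K (m+1) - K m : ℕ) : ℝ) := hp
        _ = Real.sqrt (k+3)^k * 3^k * ((K (m+1) - K m : ℕ) : ℝ) := rfl
    · -- m odd, partner is m-1
      have hlt : ((ixf ⟨m, hmn⟩) : ℕ) < ((⟨m, hmn⟩ : Fin X.card) : ℕ) := by
        rw [hmm]; omega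
      have hp := hpair (ixf ⟨m, hmn⟩) ⟨m, hmn⟩ hlt
      have hidx1 : 2*(m/2) = ((ixf ⟨m, hmn⟩) : ℕ) := by omega
      have hidx2 : 2*(m/2)+1 = m := by omega
      rw [hidx2, hidx1]
      rw [div_mul_eq_mul_div, le_div_iff₀ h3N]
      calc dist ((e ⟨m, hmn⟩ : ↥X) : EuclideanSpace ℝ (Fin k))
            ((e (ixf ⟨m, hmn⟩) : ↥X) : EuclideanSpace ℝ (Fin k)) ^ k * 3^(L*k)
          = dist ((e (ixf ⟨m, hmn⟩) : ↥X) : EuclideanSpace ℝ (Fin k))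
            ((e ⟨m, hmn⟩ : ↥X) : EuclideanSpace ℝ (Fin k)) ^ k * 3^(L*k) := by
              rw [dist_comm]
        _ ≤ Real.sqrt (k+3)^k * 3^k *
            ((K ((⟨m, hmn⟩ : Fin X.card) : ℕ) - K ((ixf ⟨m, hmn⟩) : ℕ) : ℕ) : ℝ) := hp
        _ = Real.sqrt (k+3)^k * 3^k * ((K m - K ((ixf ⟨m, hmn⟩) : ℕ) : ℕ) : ℝ) := rfl
  -- sum of gaps
  have hgap : ∑ m ∈ Finset.range X.card, ((K (2*(m/2)+1) - K (2*(m/2)) : ℕ) : ℝ)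
      ≤ 2 * 3^(L*k) := by
    have hcard2 : X.card = 2*(X.card/2) := by omega
    rw [hcard2, sum_pair_split (fun m => ((K (2*(m/2)+1) - K (2*(m/2)) : ℕ) : ℝ)) (X.card/2)]
    have hterm : ∀ m, ((K (2*((2*m)/2)+1) - K (2*((2*m)/2)) : ℕ) : ℝ)
        + ((K (2*((2*m+1)/2)+1) - K (2*((2*m+1)/2)) : ℕ) : ℝ)
        = 2 * ((K (2*m+1) - K (2*m) : ℕ) : ℝ) := by
      intro m
      have h1 : (2*m)/2 = m := by omega
      have h2 : (2*m+1)/2 = m := by omega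
      rw [h1, h2]
      ring
    rw [Finset.sum_congr rfl (fun m _ => hterm m), ← Finset.mul_sum]
    have hmono : ∀ a b, a ≤ b → b < X.card → K a ≤ K b := by
      intro a b hab hbn
      rcases Nat.lt_or_ge a b with h | h
      · exact le_of_lt (hKmono a b h hbn)
      · have : a = b := by omega
        rw [this]
    have htel := telescope X.card K hmono (X.card/2) (by omega)
    have hlast : K (2*(X.card/2) - 1) < 3^(L*k) := hKlt _ (by omega)
    have hsumN : (∑ m ∈ Finset.range (X.card/2), (K (2*m+1) - K (2*m)) : ℕ) ≤ 3^(L*k) := by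
      omega
    calc 2 * ∑ m ∈ Finset.range (X.card/2), ((K (2*m+1) - K (2*m) : ℕ) : ℝ)
        = 2 * (((∑ m ∈ Finset.range (X.card/2), (K (2*m+1) - K (2*m)) : ℕ) : ℕ) : ℝ) := by
          rw [Nat.cast_sum]
      _ ≤ 2 * ((3^(L*k) : ℕ) : ℝ) := by
          have := Nat.cast_le (α := ℝ).mpr hsumN
          linarith
      _ = 2 * 3^(L*k) := by push_cast; ring
  -- put everything together
  have hmain : ∑ a : ↥X, dist (a : EuclideanSpace ℝ (Fin k))
        ((e (ixf (e.symm a)) : ↥X) : EuclideanSpace ℝ (Fin k)) ^ k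
      ≤ 2 * (Real.sqrt (k+3)^k * 3^k) := by
    rw [hsum1, hsum2]
    calc ∑ m ∈ Finset.range X.card, (fun m => if h : m < X.card then
          dist ((e ⟨m, h⟩ : ↥X) : EuclideanSpace ℝ (Fin k))
          ((e (ixf ⟨m, h⟩) : ↥X) : EuclideanSpace ℝ (Fin k)) ^ k else 0) m
        ≤ ∑ m ∈ Finset.range X.card, (Real.sqrt (k+3)^k * 3^k / 3^(L*k)) *
            ((K (2*(m/2)+1) - K (2*(m/2)) : ℕ) : ℝ) := Finset.sum_le_sum hFb
      _ = (Real.sqrt (k+3)^k * 3^k / 3^(L*k)) *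
            ∑ m ∈ Finset.range X.card, ((K (2*(m/2)+1) - K (2*(m/2)) : ℕ) : ℝ) := by
          rw [Finset.mul_sum]
      _ ≤ (Real.sqrt (k+3)^k * 3^k / 3^(L*k)) * (2 * 3^(L*k)) := by
          apply mul_le_mul_of_nonneg_left hgap (by positivity)
      _ = 2 * (Real.sqrt (k+3)^k * 3^k) := by field_simp
  -- final numeric inequality
  have h9 : (9:ℝ)*((k:ℝ)+3)^k ≤ ((5:ℝ)*(k:ℝ))^k := by
    have hc := Nat.cast_le (α := ℝ).mpr (nine_le k hk)
    push_cast at hc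
    convert hc using 2 <;> norm_num
  have hfin : 3 * Real.sqrt ((k:ℝ)+3)^k ≤ Real.sqrt (5*(k:ℝ))^k := by
    have h53 : (0:ℝ) ≤ (k:ℝ)+3 := by positivity
    have h5k : (0:ℝ) ≤ 5*(k:ℝ) := by positivity
    have h99 : Real.sqrt 9 = 3 := by
      rw [show (9:ℝ) = 3^2 by norm_num, Real.sqrt_sq (by norm_num)]
    have hL9 : 3 * Real.sqrt (((k:ℝ)+3)^k) = Real.sqrt (9*((k:ℝ)+3)^k) := by
      rw [Real.sqrt_mul (by norm_num : (0:ℝ) ≤ 9), h99]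
    rw [← sqrt_pow' _ h53, ← sqrt_pow' _ h5k, hL9]
    exact Real.sqrt_le_sqrt h9
  have h3k : (0:ℝ) < 3^k := by positivity
  calc (1/2 : ℝ) * ∑ a : ↥X, dist (a : EuclideanSpace ℝ (Fin k))
        ((e (ixf (e.symm a)) : ↥X) : EuclideanSpace ℝ (Fin k)) ^ k
      ≤ (1/2) * (2 * (Real.sqrt (k+3)^k * 3^k)) := by
        apply mul_le_mul_of_nonneg_left hmain (by norm_num)
    _ = Real.sqrt ((k:ℝ)+3)^k * 3^k := by ring
    _ ≤ (1/3 : ℝ) * 3^k * Real.sqrt (5*(k:ℝ))^k := by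
        have hh := mul_le_mul_of_nonneg_left hfin
          (le_of_lt (by positivity : (0:ℝ) < (1/3) * 3^k))
        calc Real.sqrt ((k:ℝ)+3)^k * 3^k
            = (1/3) * 3^k * (3 * Real.sqrt ((k:ℝ)+3)^k) := by ring
          _ ≤ (1/3) * 3^k * Real.sqrt (5*(k:ℝ))^k := hh
end

section
/- Let x_1, …, x_n be n ≥ 2 points in the unit square [0,1]^2 ⊂ ℝ^2, where n is even. Then there exists a perfect matching M of the n points (a partition into n/2 pairs) such that Σ_{e ∈ M} |e|^2 ≤ 2. -/
noncomputable section Stmt18Aux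

open scoped BigOperators

local notation "⟪" x ", " y "⟫" => @inner ℝ _ _ x y

variable {E : Type*} [NormedAddCommGroup E] [InnerProductSpace ℝ E]

attribute [local instance] Classical.propDecidable

set_option linter.unusedSectionVars false

/-- cost of a path from `s` through the list to `e`, sum of squared distances. -/
def pcost : E → List E → E → ℝ
  | s, [], e => dist s e ^ 2
  | s, p :: l, e => dist s p ^ 2 + pcost p l e

/-- cost of the matching pairing consecutive elements. -/
def mcost : List E → ℝ
  | [] => 0
  | [_] => 0
  | x :: y :: r => dist x y ^ 2 + mcost r

/-- the partner function of the consecutive pairing. -/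
def partner : List E → E → E
  | x :: y :: r, p => if p = x then y else if p = y then x else partner r p
  | _, p => p

lemma pcost_append (l₁ : List E) (s e q : E) (l₂ : List E) :
    pcost s (l₁ ++ q :: l₂) e = pcost s l₁ q + pcost q l₂ e := by
  induction l₁ generalizing s with
  | nil => simp [pcost]
  | cons p r ih => simp [pcost, ih]; ring

lemma key_ineq (x y c : E) (h : 0 ≤ ⟪x - c, y - c⟫) :
    dist x y ^ 2 ≤ dist x c ^ 2 + dist c y ^ 2 := by
  have hxy : x - y = (x - c) - (y - c) := by abel
  rw [dist_eq_norm, dist_eq_norm, dist_eq_norm, hxy, norm_sub_sq_real]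
  have : ‖c - y‖ = ‖y - c‖ := norm_sub_rev c y
  rw [this]
  nlinarith [h]

lemma pcost_end_swap (c y : E) :
    ∀ (l : List E) (s : E), (∀ x, (x = s ∨ x ∈ l) → 0 ≤ ⟪x - c, y - c⟫) →
      pcost s l y ≤ pcost s l c + dist c y ^ 2 := by
  intro l
  induction l with
  | nil =>
    intro s h
    simpa [pcost] using key_ineq s y c (h s (Or.inl rfl))
  | cons p r ih =>
    intro s h
    have := ih p (fun x hx => h x (by rcases hx with h1 | h2
                                      · exact Or.inr (by simp [h1])
                                      · exact Or.inr (by simp [h2])))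
    simp only [pcost]
    linarith

lemma mcost_cyc : ∀ (n : ℕ) (r : List E), r.length = n → Even n → ∀ (w x : E),
    mcost r + mcost (w :: (r ++ [x])) = pcost w r x := by
  intro n
  induction n using Nat.strong_induction_on with
  | _ n IH =>
    intro r hr he w x
    match r with
    | [] => simp [mcost, pcost]
    | [y] => simp at hr; rw [← hr] at he; norm_num at he
    | y :: z :: r' =>
      simp only [List.length_cons] at hr
      have hr' : r'.length = n - 2 := by omega
      have he' : Even (n - 2) := by
        rcases he with ⟨k, hk⟩
        exact ⟨k - 1, by omega⟩
      have h2 : n - 2 < n := by omega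
      have := IH (n - 2) h2 r' hr' he' z x
      simp only [mcost, pcost, List.cons_append, List.append_eq]
      linarith

lemma partner_mem : ∀ (n : ℕ) (l : List E), l.length = n → ∀ p ∈ l, partner l p ∈ l := by
  intro n
  induction n using Nat.strong_induction_on with
  | _ n IH =>
    intro l hl p hp
    match l with
    | [] => simp at hp
    | [z] => simpa [partner] using hp
    | x :: y :: r =>
      simp only [List.length_cons] at hl
      by_cases h1 : p = x
      · simp [partner, h1]
      · by_cases h2 : p = y
        · simp [partner, h1, h2]
        · have hpr : p ∈ r := by
            simp only [List.mem_cons] at hp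
            rcases hp with h | h | h
            · exact absurd h h1
            · exact absurd h h2
            · exact h
          have := IH (n - 2) (by omega) r (by omega) p hpr
          simp only [partner, if_neg h1, if_neg h2]
          right; right; exact this

lemma partner_invol : ∀ (n : ℕ) (l : List E), l.length = n → l.Nodup →
    ∀ p ∈ l, partner l (partner l p) = p := by
  intro n
  induction n using Nat.strong_induction_on with
  | _ n IH =>
    intro l hl hnd p hp
    match l with
    | [] => simp at hp
    | [z] =>
      simp at hp
      simp [partner, hp]
    | x :: y :: r =>
      simp only [List.length_cons] at hl
      have hxy : x ≠ y := by
        intro h; rw [h] at hnd; simp at hnd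
      have hxr : x ∉ r := by
        have := hnd; simp at this; tauto
      have hyr : y ∉ r := by
        have := hnd; simp at this; tauto
      by_cases h1 : p = x
      · simp [partner, h1, Ne.symm hxy]
      · by_cases h2 : p = y
        · simp [partner, h1, h2, Ne.symm hxy]
        · have hpr : p ∈ r := by
            simp only [List.mem_cons] at hp
            rcases hp with h | h | h
            · exact absurd h h1
            · exact absurd h h2
            · exact h
          have hq : partner r p ∈ r := partner_mem r.length r rfl p hpr
          have hq1 : partner r p ≠ x := fun h => hxr (h ▸ hq)
          have hq2 : partner r p ≠ y := fun h => hyr (h ▸ hq)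
          have hndr : r.Nodup := by simp at hnd; tauto
          have := IH (n - 2) (by omega) r (by omega) hndr p hpr
          simp only [partner, if_neg h1, if_neg h2, if_neg hq1, if_neg hq2]
          exact this

lemma partner_ne : ∀ (n : ℕ) (l : List E), l.length = n → Even n → l.Nodup →
    ∀ p ∈ l, partner l p ≠ p := by
  intro n
  induction n using Nat.strong_induction_on with
  | _ n IH =>
    intro l hl he hnd p hp
    match l with
    | [] => simp at hp
    | [z] => simp at hl; rw [← hl] at he; norm_num at he
    | x :: y :: r =>
      simp only [List.length_cons] at hl
      have hxy : x ≠ y := by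
        intro h; rw [h] at hnd; simp at hnd
      by_cases h1 : p = x
      · rw [h1]; simp [partner]; exact Ne.symm hxy
      · by_cases h2 : p = y
        · rw [h2]; simp [partner, Ne.symm hxy]; exact hxy
        · have hpr : p ∈ r := by
            simp only [List.mem_cons] at hp
            rcases hp with h | h | h
            · exact absurd h h1
            · exact absurd h h2
            · exact h
          have hndr : r.Nodup := by simp at hnd; tauto
          have he' : Even (n - 2) := by
            rcases he with ⟨k, hk⟩; exact ⟨k - 1, by omega⟩
          have := IH (n - 2) (by omega) r (by omega) he' hndr p hpr
          simp only [partner, if_neg h1, if_neg h2]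
          exact this

lemma partner_sum : ∀ (n : ℕ) (l : List E), l.length = n → Even n → l.Nodup →
    (l.map (fun p => dist p (partner l p) ^ 2)).sum = 2 * mcost l := by
  intro n
  induction n using Nat.strong_induction_on with
  | _ n IH =>
    intro l hl he hnd
    match l with
    | [] => simp [mcost]
    | [z] => simp at hl; rw [← hl] at he; norm_num at he
    | x :: y :: r =>
      simp only [List.length_cons] at hl
      have hxy : x ≠ y := by
        intro h; rw [h] at hnd; simp at hnd
      have hxr : x ∉ r := by simp at hnd; tauto
      have hyr : y ∉ r := by simp at hnd; tauto
      have hndr : r.Nodup := by simp at hnd; tauto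
      have he' : Even (n - 2) := by
        rcases he with ⟨k, hk⟩; exact ⟨k - 1, by omega⟩
      have hmapeq : (r.map (fun p => dist p (partner (x :: y :: r) p) ^ 2)) =
          (r.map (fun p => dist p (partner r p) ^ 2)) := by
        apply List.map_congr_left
        intro p hp
        have h1 : p ≠ x := fun h => hxr (h ▸ hp)
        have h2 : p ≠ y := fun h => hyr (h ▸ hp)
        simp [partner, if_neg h1, if_neg h2]
      have hr := IH (n - 2) (by omega) r (by omega) he' hndr
      simp only [List.map_cons, List.sum_cons, mcost]
      rw [hmapeq, hr]
      have hpx : partner (x :: y :: r) x = y := by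
        simp [partner]
      have hpy : partner (x :: y :: r) y = x := by
        simp [partner, Ne.symm hxy]
      rw [hpx, hpy, dist_comm y x]
      ring

/-- membership in the right isosceles triangle with hypotenuse from `s` to `e`, apex `c`. -/
def InCone (s e c p : E) : Prop :=
  ∃ α β : ℝ, 0 ≤ α ∧ 0 ≤ β ∧ α + β ≤ 1 ∧ p - c = α • (s - c) + β • (e - c)

lemma norm_smul_add_sq (u v : E) (h : ⟪u, v⟫ = 0) (α β : ℝ) :
    ‖α • u + β • v‖ ^ 2 = α ^ 2 * ‖u‖ ^ 2 + β ^ 2 * ‖v‖ ^ 2 := by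
  rw [norm_add_sq_real, norm_smul, norm_smul, real_inner_smul_left, real_inner_smul_right, h]
  simp [mul_pow, sq_abs]


lemma inner_comb (u v : E) (h : ⟪u, v⟫ = 0) (a b a' b' : ℝ) :
    ⟪a • u + b • v, a' • u + b' • v⟫ = a * a' * ‖u‖ ^ 2 + b * b' * ‖v‖ ^ 2 := by
  have h' : ⟪v, u⟫ = 0 := by rw [real_inner_comm]; exact h
  simp [inner_add_left, inner_add_right, real_inner_smul_left, real_inner_smul_right, h, h',
    real_inner_self_eq_norm_sq]
  ring

/-- coordinates of a point in the triangle, chosen by choice. -/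
def coordFn (s e c : E) : E → ℝ × ℝ := fun p =>
  if h : InCone s e c p then (h.choose, h.choose_spec.choose) else (0, 0)

lemma coordFn_spec (s e c p : E) (h : InCone s e c p) :
    0 ≤ (coordFn s e c p).1 ∧ 0 ≤ (coordFn s e c p).2 ∧
      (coordFn s e c p).1 + (coordFn s e c p).2 ≤ 1 ∧
      p - c = (coordFn s e c p).1 • (s - c) + (coordFn s e c p).2 • (e - c) := by
  simp only [coordFn, dif_pos h]
  exact h.choose_spec.choose_spec

attribute [irreducible] coordFn

set_option maxHeartbeats 2000000 in
/-- The main recursive lemma: a set of points in a right isosceles triangle with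
hypotenuse `s e` and apex `c` can be ordered into a path from `s` to `e` with
total squared length (including anchor edges) at most `dist s e ^ 2`. -/
lemma tri_path : ∀ (n : ℕ) (l : List E) (s e c : E), l.length = n → l.Nodup →
    ⟪s - c, e - c⟫ = 0 → ‖s - c‖ ^ 2 = ‖e - c‖ ^ 2 → (∀ p ∈ l, InCone s e c p) →
    ∃ l' : List E, l.Perm l' ∧ pcost s l' e ≤ dist s e ^ 2 := by
  intro n
  induction n using Nat.strong_induction_on with
  | _ n IHo =>
    intro l s e c hlen hnd horth hnorm hcone
    match l with
    | [] => exact ⟨[], List.Perm.refl _, by simp [pcost]⟩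
    | [p] =>
      refine ⟨[p], List.Perm.refl _, ?_⟩
      obtain ⟨α, β, hα, hβ, hαβ, hp⟩ := hcone p (by simp)
      have hsp : s - p = (1 - α) • (s - c) + (-β) • (e - c) := by
        have h1 : s - p = (s - c) - (p - c) := by abel
        rw [h1, hp]; module
      have hpe : p - e = α • (s - c) + (β - 1) • (e - c) := by
        have h1 : p - e = (p - c) - (e - c) := by abel
        rw [h1, hp]; module
      have hse : s - e = (1 : ℝ) • (s - c) + (-1 : ℝ) • (e - c) := by module
      have e1 : dist s p ^ 2 = (1 - α) ^ 2 * ‖s - c‖ ^ 2 + (-β) ^ 2 * ‖e - c‖ ^ 2 := by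
        rw [dist_eq_norm, hsp, norm_smul_add_sq _ _ horth]
      have e2 : dist p e ^ 2 = α ^ 2 * ‖s - c‖ ^ 2 + (β - 1) ^ 2 * ‖e - c‖ ^ 2 := by
        rw [dist_eq_norm, hpe, norm_smul_add_sq _ _ horth]
      have e3 : dist s e ^ 2 = 1 ^ 2 * ‖s - c‖ ^ 2 + (-1 : ℝ) ^ 2 * ‖e - c‖ ^ 2 := by
        rw [dist_eq_norm, hse, norm_smul_add_sq _ _ horth]
      have hL : (0:ℝ) ≤ ‖s - c‖ ^ 2 := sq_nonneg _
      simp only [pcost]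
      rw [← hnorm] at e1 e2 e3
      have hα1 : α ≤ 1 := by linarith
      have hβ1 : β ≤ 1 := by linarith
      nlinarith [e1, e2, e3, mul_nonneg (mul_nonneg hα (sub_nonneg.mpr hα1)) hL,
        mul_nonneg (mul_nonneg hβ (sub_nonneg.mpr hβ1)) hL]
    | p₀ :: q₀ :: rest =>
      have hne : p₀ ≠ q₀ := by
        intro h; rw [h] at hnd; simp at hnd
      have hd : (0:ℝ) < dist p₀ q₀ ^ 2 :=
        pow_pos (dist_pos.mpr hne) 2
      have key : ∀ (k : ℕ) (s e c : E), ⟪s - c, e - c⟫ = 0 → ‖s - c‖ ^ 2 = ‖e - c‖ ^ 2 →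
          (∀ p ∈ (p₀ :: q₀ :: rest), InCone s e c p) →
          dist s e ^ 2 < dist p₀ q₀ ^ 2 * 2 ^ k →
          ∃ l', (p₀ :: q₀ :: rest).Perm l' ∧ pcost s l' e ≤ dist s e ^ 2 := by
        intro k
        induction k with
        | zero =>
          intro s e c horth hnorm hcone hsize
          exfalso
          obtain ⟨α, β, hα, hβ, hαβ, hp⟩ := hcone p₀ (by simp)
          obtain ⟨γ, δ, hγ, hδ, hγδ, hq⟩ := hcone q₀ (by simp)
          have hpq : p₀ - q₀ = (α - γ) • (s - c) + (β - δ) • (e - c) := by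
            have h1 : p₀ - q₀ = (p₀ - c) - (q₀ - c) := by abel
            rw [h1, hp, hq]; module
          have e1 : dist p₀ q₀ ^ 2 = (α - γ) ^ 2 * ‖s - c‖ ^ 2 + (β - δ) ^ 2 * ‖e - c‖ ^ 2 := by
            rw [dist_eq_norm, hpq, norm_smul_add_sq _ _ horth]
          have hse : s - e = (1 : ℝ) • (s - c) + (-1 : ℝ) • (e - c) := by module
          have e3 : dist s e ^ 2 = 1 ^ 2 * ‖s - c‖ ^ 2 + (-1 : ℝ) ^ 2 * ‖e - c‖ ^ 2 := by
            rw [dist_eq_norm, hse, norm_smul_add_sq _ _ horth]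
          have hL : (0:ℝ) ≤ ‖s - c‖ ^ 2 := sq_nonneg _
          rw [← hnorm] at e1 e3
          have b1 : (α - γ) ^ 2 ≤ 1 := by nlinarith
          have b2 : (β - δ) ^ 2 ≤ 1 := by nlinarith
          have hd2 : dist p₀ q₀ ^ 2 ≤ dist s e ^ 2 := by nlinarith
          simp only [pow_zero, mul_one] at hsize
          linarith
        | succ k IHk =>
          intro s e c horth hnorm hcone hsize
          have huv : ∀ p ∈ (p₀ :: q₀ :: rest), ∃ α β : ℝ, 0 ≤ α ∧ 0 ≤ β ∧ α + β ≤ 1 ∧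
              p - c = α • (s - c) + β • (e - c) := hcone
          classical
          have hF : ∀ p, InCone s e c p → 0 ≤ (coordFn s e c p).1 ∧ 0 ≤ (coordFn s e c p).2 ∧
              (coordFn s e c p).1 + (coordFn s e c p).2 ≤ 1 ∧
              p - c = (coordFn s e c p).1 • (s - c) + (coordFn s e c p).2 • (e - c) :=
            coordFn_spec s e c
          set m : E := (2⁻¹ : ℝ) • (s + e) with hmdef
          have hsm : s - m = (2⁻¹ : ℝ) • (s - c) + (-(2⁻¹) : ℝ) • (e - c) := by
            rw [hmdef]; module
          have hcm : c - m = (-(2⁻¹) : ℝ) • (s - c) + (-(2⁻¹) : ℝ) • (e - c) := by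
            rw [hmdef]; module
          have hem : e - m = (-(2⁻¹) : ℝ) • (s - c) + (2⁻¹ : ℝ) • (e - c) := by
            rw [hmdef]; module
          have horth₁ : ⟪s - m, c - m⟫ = 0 := by
            rw [hsm, hcm, inner_comb _ _ horth]; rw [← hnorm]; ring
          have hnorm₁ : ‖s - m‖ ^ 2 = ‖c - m‖ ^ 2 := by
            rw [hsm, hcm, norm_smul_add_sq _ _ horth, norm_smul_add_sq _ _ horth, ← hnorm]; ring
          have horth₂ : ⟪c - m, e - m⟫ = 0 := by
            rw [hcm, hem, inner_comb _ _ horth]; rw [← hnorm]; ring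
          have hnorm₂ : ‖c - m‖ ^ 2 = ‖e - m‖ ^ 2 := by
            rw [hcm, hem, norm_smul_add_sq _ _ horth, norm_smul_add_sq _ _ horth, ← hnorm]; ring
          have hdistsc : dist s c ^ 2 = ‖s - c‖ ^ 2 := by rw [dist_eq_norm]
          have hdistce : dist c e ^ 2 = ‖e - c‖ ^ 2 := by
            rw [dist_eq_norm, norm_sub_rev]
          have hdistse : dist s e ^ 2 = ‖s - c‖ ^ 2 + ‖e - c‖ ^ 2 := by
            have hse : s - e = (1 : ℝ) • (s - c) + (-1 : ℝ) • (e - c) := by module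
            rw [dist_eq_norm, hse, norm_smul_add_sq _ _ horth]; ring
          have hsize' : ‖s - c‖ ^ 2 < dist p₀ q₀ ^ 2 * 2 ^ k := by
            rw [hdistse, ← hnorm] at hsize
            rw [pow_succ (2:ℝ) k] at hsize
            have h3 : dist p₀ q₀ ^ 2 * (2 ^ k * 2) = dist p₀ q₀ ^ 2 * 2 ^ k * 2 := by ring
            rw [h3] at hsize
            linarith
          -- cone certificates for the two children
          have cone₁ : ∀ p, InCone s e c p → (coordFn s e c p).2 ≤ (coordFn s e c p).1 → InCone s c m p := by
            intro p hin hle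
            obtain ⟨h1, h2, h3, h4⟩ := hF p hin
            refine ⟨(coordFn s e c p).1 - (coordFn s e c p).2, 1 - (coordFn s e c p).1 - (coordFn s e c p).2, by linarith, by linarith,
              by linarith, ?_⟩
            have h5 : p - m = (p - c) + (c - m) := by abel
            rw [h5, h4, hsm, hcm]; module
          have cone₂ : ∀ p, InCone s e c p → (coordFn s e c p).1 ≤ (coordFn s e c p).2 → InCone c e m p := by
            intro p hin hle
            obtain ⟨h1, h2, h3, h4⟩ := hF p hin
            refine ⟨1 - (coordFn s e c p).1 - (coordFn s e c p).2, (coordFn s e c p).2 - (coordFn s e c p).1, by linarith, by linarith,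
              by linarith, ?_⟩
            have h5 : p - m = (p - c) + (c - m) := by abel
            rw [h5, h4, hcm, hem]; module
          -- inner product positivity facts
          have sgn₁ : ∀ p, InCone s e c p → 0 ≤ ⟪s - c, p - c⟫ := by
            intro p hin
            obtain ⟨h1, h2, h3, h4⟩ := hF p hin
            have h5 : s - c = (1:ℝ) • (s - c) + (0:ℝ) • (e - c) := by module
            rw [h5, h4, inner_comb _ _ horth]
            nlinarith [sq_nonneg ‖s - c‖, sq_nonneg ‖e - c‖]
          have sgn₂ : ∀ p, InCone s e c p → 0 ≤ ⟪p - c, e - c⟫ := by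
            intro p hin
            obtain ⟨h1, h2, h3, h4⟩ := hF p hin
            have h5 : e - c = (0:ℝ) • (s - c) + (1:ℝ) • (e - c) := by module
            rw [h5, h4, inner_comb _ _ horth]
            nlinarith [sq_nonneg ‖s - c‖, sq_nonneg ‖e - c‖]
          have sgn₃ : ∀ p q, InCone s e c p → InCone s e c q → 0 ≤ ⟪p - c, q - c⟫ := by
            intro p q hinp hinq
            obtain ⟨h1, h2, h3, h4⟩ := hF p hinp
            obtain ⟨g1, g2, g3, g4⟩ := hF q hinq
            rw [h4, g4, inner_comb _ _ horth]
            exact add_nonneg (mul_nonneg (mul_nonneg h1 g1) (sq_nonneg _))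
              (mul_nonneg (mul_nonneg h2 g2) (sq_nonneg _))
          set L := p₀ :: q₀ :: rest with hL
          set l₁ := L.filter (fun p => decide ((coordFn s e c p).2 ≤ (coordFn s e c p).1)) with hl₁
          set l₂ := L.filter (fun p => !(decide ((coordFn s e c p).2 ≤ (coordFn s e c p).1))) with hl₂
          have hsplit : (l₁ ++ l₂).Perm L := List.filter_append_perm _ L
          have hmem₁ : ∀ p ∈ l₁, p ∈ L ∧ (coordFn s e c p).2 ≤ (coordFn s e c p).1 := by
            intro p hp
            rw [hl₁, List.mem_filter] at hp
            exact ⟨hp.1, by simpa using hp.2⟩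
          have hmem₂ : ∀ p ∈ l₂, p ∈ L ∧ (coordFn s e c p).1 ≤ (coordFn s e c p).2 := by
            intro p hp
            rw [hl₂, List.mem_filter] at hp
            refine ⟨hp.1, ?_⟩
            have := hp.2
            simp at this
            linarith
          by_cases hc₂ : l₂ = []
          · -- all points in the first child triangle
            have hall : ∀ p ∈ L, InCone s c m p := by
              intro p hp
              have hnot : p ∉ l₂ := by rw [hc₂]; simp
              rw [hl₂, List.mem_filter] at hnot
              push_neg at hnot
              have h2 := hnot hp
              simp at h2
              exact cone₁ p (hcone p hp) (by linarith)
            obtain ⟨l', hperm, hcost⟩ := IHk s c m horth₁ hnorm₁ hall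
              (by rw [hdistsc]; exact hsize')
            refine ⟨l', hperm, ?_⟩
            have hswap : pcost s l' e ≤ pcost s l' c + dist c e ^ 2 := by
              apply pcost_end_swap
              intro x hx
              rcases hx with h | h
              · rw [h]; exact sgn₂ s ⟨1, 0, by norm_num, by norm_num, by norm_num, by module⟩
              · exact sgn₂ x (hcone x (hperm.symm.subset h))
            have : pcost s l' c ≤ dist s c ^ 2 := hcost
            rw [hdistse]
            rw [hdistsc] at this
            rw [hdistce] at hswap
            linarith
          · by_cases hc₁ : l₁ = []
            · -- all points in the second child triangle
              have hall : ∀ p ∈ L, InCone c e m p := by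
                intro p hp
                have hnot : p ∉ l₁ := by rw [hc₁]; simp
                rw [hl₁, List.mem_filter] at hnot
                push_neg at hnot
                have h2 := hnot hp
                simp at h2
                exact cone₂ p (hcone p hp) (le_of_lt h2)
              obtain ⟨l', hperm, hcost⟩ := IHk c e m horth₂ hnorm₂ hall
                (by rw [hdistce, ← hnorm]; exact hsize')
              refine ⟨l', hperm, ?_⟩
              obtain ⟨y, r₂, rfl⟩ : ∃ y r₂, l' = y :: r₂ := by
                cases l' with
                | nil => have := hperm.length_eq; simp at this
                | cons y r₂ => exact ⟨y, r₂, rfl⟩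
              have hy : InCone s e c y := hcone y (hperm.symm.subset (by simp))
              have hkey : dist s y ^ 2 ≤ dist s c ^ 2 + dist c y ^ 2 :=
                key_ineq s y c (sgn₁ y hy)
              have hexp : pcost s (y :: r₂) e = dist s y ^ 2 + pcost y r₂ e := rfl
              have hexp2 : pcost c (y :: r₂) e = dist c y ^ 2 + pcost y r₂ e := rfl
              rw [hdistse]
              rw [hdistce, ← hnorm] at hcost
              rw [hexp2] at hcost
              rw [hdistsc] at hkey
              rw [hexp]
              linarith
            · -- both children nonempty : split and recurse on smaller lists
              have hnd₁ : l₁.Nodup := hnd.filter _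
              have hnd₂ : l₂.Nodup := hnd.filter _
              have hlensum : l₁.length + l₂.length = n := by
                have := hsplit.length_eq
                simpa [hlen] using this
              have h880 : l₁.length < n := by
                have h2 : 0 < l₂.length := List.length_pos_iff.mpr hc₂
                omega
              have h881 : l₂.length < n := by
                have h2 : 0 < l₁.length := List.length_pos_iff.mpr hc₁
                omega
              have hcone₁ : ∀ p ∈ l₁, InCone s c m p := by
                intro p hp
                obtain ⟨hpL, hle⟩ := hmem₁ p hp
                exact cone₁ p (hcone p hpL) hle
              have hcone₂ : ∀ p ∈ l₂, InCone c e m p := by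
                intro p hp
                obtain ⟨hpL, hle⟩ := hmem₂ p hp
                exact cone₂ p (hcone p hpL) hle
              obtain ⟨l₁', hperm₁, hcost₁⟩ :=
                IHo l₁.length h880 l₁ s c m rfl hnd₁ horth₁ hnorm₁ hcone₁
              obtain ⟨l₂', hperm₂, hcost₂⟩ :=
                IHo l₂.length h881 l₂ c e m rfl hnd₂ horth₂ hnorm₂ hcone₂
              obtain ⟨y, r₂, rfl⟩ : ∃ y r₂, l₂' = y :: r₂ := by
                cases l₂' with
                | nil => exact absurd (List.Perm.eq_nil hperm₂) hc₂
                | cons y r₂ => exact ⟨y, r₂, rfl⟩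
              refine ⟨l₁' ++ y :: r₂, ?_, ?_⟩
              · exact hsplit.symm.trans (hperm₁.append hperm₂)
              · have hyL : y ∈ L := by
                  have : y ∈ l₂ := hperm₂.symm.subset (by simp)
                  exact (hmem₂ y this).1
                have hysgn : ∀ x, (x = s ∨ x ∈ l₁') → 0 ≤ ⟪x - c, y - c⟫ := by
                  intro x hx
                  rcases hx with h | h
                  · rw [h]
                    exact sgn₁ y (hcone y hyL)
                  · have hxL : x ∈ L := by
                      have : x ∈ l₁ := hperm₁.symm.subset h
                      exact (hmem₁ x this).1
                    exact sgn₃ x y (hcone x hxL) (hcone y hyL)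
                have hswap : pcost s l₁' y ≤ pcost s l₁' c + dist c y ^ 2 :=
                  pcost_end_swap c y l₁' s hysgn
                have happ : pcost s (l₁' ++ y :: r₂) e = pcost s l₁' y + pcost y r₂ e :=
                  pcost_append l₁' s e y r₂
                have hexp2 : pcost c (y :: r₂) e = dist c y ^ 2 + pcost y r₂ e := rfl
                rw [happ, hdistse]
                rw [hdistsc] at hcost₁
                rw [hdistce, ← hnorm] at hcost₂
                rw [hexp2] at hcost₂
                linarith
      obtain ⟨k, hk⟩ := pow_unbounded_of_one_lt (dist s e ^ 2 / dist p₀ q₀ ^ 2)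
        (one_lt_two (α := ℝ))
      have hk' : dist s e ^ 2 < dist p₀ q₀ ^ 2 * 2 ^ k := by
        rw [div_lt_iff₀ hd] at hk
        calc dist s e ^ 2 < 2 ^ k * dist p₀ q₀ ^ 2 := hk
          _ = dist p₀ q₀ ^ 2 * 2 ^ k := by ring
      exact key k s e c horth hnorm hcone hk'



section Square

abbrev E2 := EuclideanSpace ℝ (Fin 2)

def pa : E2 := 0
def pb : E2 := EuclideanSpace.single 0 1 + EuclideanSpace.single 1 1
def pc1 : E2 := EuclideanSpace.single 0 1
def pc2 : E2 := EuclideanSpace.single 1 1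

lemma pa_apply (i : Fin 2) : pa i = 0 := rfl

lemma pb_apply_0 : pb 0 = 1 := by simp [pb, EuclideanSpace.single_apply]
lemma pb_apply_1 : pb 1 = 1 := by simp [pb, EuclideanSpace.single_apply]
lemma pc1_apply_0 : pc1 0 = 1 := by simp [pc1, EuclideanSpace.single_apply]
lemma pc1_apply_1 : pc1 1 = 0 := by simp [pc1, EuclideanSpace.single_apply]
lemma pc2_apply_0 : pc2 0 = 0 := by simp [pc2, EuclideanSpace.single_apply]
lemma pc2_apply_1 : pc2 1 = 1 := by simp [pc2, EuclideanSpace.single_apply]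

lemma inner_E2 (x y : E2) : ⟪x, y⟫ = x 0 * y 0 + x 1 * y 1 := by
  rw [PiLp.inner_apply, Fin.sum_univ_two]
  simp [RCLike.inner_apply, conj_trivial]
  ring

lemma norm_sq_E2 (x : E2) : ‖x‖ ^ 2 = x 0 ^ 2 + x 1 ^ 2 := by
  rw [← real_inner_self_eq_norm_sq, inner_E2]; ring

lemma dist_sq_E2 (x y : E2) : dist x y ^ 2 = (x 0 - y 0) ^ 2 + (x 1 - y 1) ^ 2 := by
  rw [dist_eq_norm, norm_sq_E2]
  simp [PiLp.sub_apply]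

lemma sub_apply_E2 (x y : E2) (i : Fin 2) : (x - y) i = x i - y i := rfl
lemma add_apply_E2 (x y : E2) (i : Fin 2) : (x + y) i = x i + y i := rfl
lemma smul_apply_E2 (a : ℝ) (x : E2) (i : Fin 2) : (a • x) i = a * x i := rfl

lemma corner_a_sgn (x y : E2) (hx0 : 0 ≤ x 0) (hx1 : 0 ≤ x 1) (hy0 : 0 ≤ y 0)
    (hy1 : 0 ≤ y 1) : 0 ≤ ⟪x - pa, y - pa⟫ := by
  rw [inner_E2]
  simp only [sub_apply_E2, pa_apply, sub_zero]
  positivity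

lemma corner_b_sgn (x y : E2) (hx0 : x 0 ≤ 1) (hx1 : x 1 ≤ 1) (hy0 : y 0 ≤ 1)
    (hy1 : y 1 ≤ 1) : 0 ≤ ⟪x - pb, y - pb⟫ := by
  rw [inner_E2]
  simp only [sub_apply_E2, pb_apply_0, pb_apply_1]
  nlinarith

lemma dist_pa_pb : dist pa pb ^ 2 = 2 := by
  rw [dist_sq_E2]
  simp [pa_apply, pb_apply_0, pb_apply_1]
  norm_num

lemma dist_to_b_le (x : E2) (h0 : x 0 ∈ Set.Icc (0:ℝ) 1) (h1 : x 1 ∈ Set.Icc (0:ℝ) 1) :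
    dist pb x ^ 2 ≤ 2 := by
  rw [dist_sq_E2]
  simp only [pb_apply_0, pb_apply_1]
  obtain ⟨a1, a2⟩ := h0
  obtain ⟨b1, b2⟩ := h1
  nlinarith

lemma dist_to_a_le (x : E2) (h0 : x 0 ∈ Set.Icc (0:ℝ) 1) (h1 : x 1 ∈ Set.Icc (0:ℝ) 1) :
    dist pa x ^ 2 ≤ 2 := by
  rw [dist_sq_E2]
  simp only [pa_apply]
  obtain ⟨a1, a2⟩ := h0
  obtain ⟨b1, b2⟩ := h1
  nlinarith

lemma triA_orth : ⟪pa - pc1, pb - pc1⟫ = 0 := by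
  rw [inner_E2]
  simp [sub_apply_E2, pa_apply, pb_apply_0, pb_apply_1, pc1_apply_0, pc1_apply_1]

lemma triA_norm : ‖pa - pc1‖ ^ 2 = ‖pb - pc1‖ ^ 2 := by
  rw [norm_sq_E2, norm_sq_E2]
  simp [sub_apply_E2, pa_apply, pb_apply_0, pb_apply_1, pc1_apply_0, pc1_apply_1]

lemma triB_orth : ⟪pb - pc2, pa - pc2⟫ = 0 := by
  rw [inner_E2]
  simp [sub_apply_E2, pa_apply, pb_apply_0, pb_apply_1, pc2_apply_0, pc2_apply_1]

lemma triB_norm : ‖pb - pc2‖ ^ 2 = ‖pa - pc2‖ ^ 2 := by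
  rw [norm_sq_E2, norm_sq_E2]
  simp [sub_apply_E2, pa_apply, pb_apply_0, pb_apply_1, pc2_apply_0, pc2_apply_1]

lemma memA (p : E2) (h0 : p 0 ∈ Set.Icc (0:ℝ) 1) (h1 : p 1 ∈ Set.Icc (0:ℝ) 1)
    (hle : p 1 ≤ p 0) : InCone pa pb pc1 p := by
  obtain ⟨a1, a2⟩ := h0
  obtain ⟨b1, b2⟩ := h1
  refine ⟨1 - p 0, p 1, by linarith, by linarith, by linarith, ?_⟩
  ext i
  fin_cases i <;>
    simp [sub_apply_E2, add_apply_E2, smul_apply_E2, pa_apply, pb_apply_0, pb_apply_1,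
      pc1_apply_0, pc1_apply_1] <;> ring

lemma memB (p : E2) (h0 : p 0 ∈ Set.Icc (0:ℝ) 1) (h1 : p 1 ∈ Set.Icc (0:ℝ) 1)
    (hle : p 0 ≤ p 1) : InCone pb pa pc2 p := by
  obtain ⟨a1, a2⟩ := h0
  obtain ⟨b1, b2⟩ := h1
  refine ⟨p 0, 1 - p 1, by linarith, by linarith, by linarith, ?_⟩
  ext i
  fin_cases i <;>
    simp [sub_apply_E2, add_apply_E2, smul_apply_E2, pa_apply, pb_apply_0, pb_apply_1,
      pc2_apply_0, pc2_apply_1] <;> ring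

end Square

set_option maxHeartbeats 1000000 in
/-- For a set of `n ≥ 2` points in the unit square `[0,1]²` with `n` even, there is a perfect
matching `M` of the points (encoded as a fixed-point-free involution `φ`, so that
`∑_{e ∈ M} |e|² = (1/2)∑_{x ∈ X} |x - φ(x)|²`) with `∑_{e ∈ M} |e|² ≤ 2`. -/
theorem stmt_18 (X : Finset (EuclideanSpace ℝ (Fin 2))) (hX : 2 ≤ X.card)
    (heven : Even X.card) (hcube : ∀ x ∈ X, ∀ i, x i ∈ Set.Icc (0 : ℝ) 1) :
    ∃ φ : ↥X → ↥X, Function.Involutive φ ∧ (∀ x, φ x ≠ x) ∧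
      (1 / 2 : ℝ) *
          ∑ x : ↥X, dist (x : EuclideanSpace ℝ (Fin 2)) (φ x : EuclideanSpace ℝ (Fin 2)) ^ 2 ≤ 2 := by
  classical
  set L0 : List E2 := X.toList with hL0
  have hnodup : L0.Nodup := X.nodup_toList
  have hlen0 : L0.length = X.card := X.length_toList
  -- split into the two triangles
  set lA : List E2 := L0.filter (fun p => decide (p 1 ≤ p 0)) with hlA
  set lB : List E2 := L0.filter (fun p => !(decide (p 1 ≤ p 0))) with hlB
  have hsplit : (lA ++ lB).Perm L0 := List.filter_append_perm _ L0
  have hndA : lA.Nodup := hnodup.filter _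
  have hndB : lB.Nodup := hnodup.filter _
  have hsq : ∀ p ∈ L0, (p 0 ∈ Set.Icc (0:ℝ) 1) ∧ (p 1 ∈ Set.Icc (0:ℝ) 1) := by
    intro p hp
    have hpX : p ∈ X := Finset.mem_toList.mp hp
    exact ⟨hcube p hpX 0, hcube p hpX 1⟩
  have hconeA : ∀ p ∈ lA, InCone pa pb pc1 p := by
    intro p hp
    rw [hlA, List.mem_filter] at hp
    obtain ⟨h0, h1⟩ := hsq p hp.1
    exact memA p h0 h1 (by simpa using hp.2)
  have hconeB : ∀ p ∈ lB, InCone pb pa pc2 p := by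
    intro p hp
    rw [hlB, List.mem_filter] at hp
    obtain ⟨h0, h1⟩ := hsq p hp.1
    have : ¬ (p 1 ≤ p 0) := by simpa using hp.2
    exact memB p h0 h1 (by linarith)
  obtain ⟨lA', hpermA, hcostA⟩ :=
    tri_path lA.length lA pa pb pc1 rfl hndA triA_orth triA_norm hconeA
  obtain ⟨lB', hpermB, hcostB⟩ :=
    tri_path lB.length lB pb pa pc2 rfl hndB triB_orth triB_norm hconeB
  rw [dist_pa_pb] at hcostA
  have hdist_ba : dist pb pa ^ 2 = 2 := by rw [dist_comm]; exact dist_pa_pb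
  rw [hdist_ba] at hcostB
  set l : List E2 := lA' ++ lB' with hldef
  have hperm : L0.Perm l := by
    refine hsplit.symm.trans ?_
    exact hpermA.append hpermB
  have hmemL0 : ∀ p ∈ l, p ∈ L0 := fun p hp => hperm.symm.subset hp
  have hsqL : ∀ p ∈ l, (p 0 ∈ Set.Icc (0:ℝ) 1) ∧ (p 1 ∈ Set.Icc (0:ℝ) 1) :=
    fun p hp => hsq p (hmemL0 p hp)
  -- the cyclic bound
  have hll : l.length = X.card := by rw [← hperm.length_eq, hlen0]
  obtain ⟨x, r, hlcons⟩ : ∃ x r, l = x :: r := by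
    cases hl : l with
    | nil => rw [hl] at hll; simp at hll; omega
    | cons x r => exact ⟨x, r, rfl⟩
  have hbsgn : ∀ z, z ∈ l → ∀ w, w ∈ l → 0 ≤ ⟪z - pb, w - pb⟫ := by
    intro z hz w hw
    obtain ⟨⟨_, hz0⟩, ⟨_, hz1⟩⟩ := hsqL z hz
    obtain ⟨⟨_, hw0⟩, ⟨_, hw1⟩⟩ := hsqL w hw
    exact corner_b_sgn z w hz0 hz1 hw0 hw1
  have hasgn : ∀ z, z ∈ l → ∀ w, w ∈ l → 0 ≤ ⟪z - pa, w - pa⟫ := by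
    intro z hz w hw
    obtain ⟨⟨hz0, _⟩, ⟨hz1, _⟩⟩ := hsqL z hz
    obtain ⟨⟨hw0, _⟩, ⟨hw1, _⟩⟩ := hsqL w hw
    exact corner_a_sgn z w hz0 hz1 hw0 hw1
  have hcyc : pcost x r x ≤ 4 := by
    have hxl : x ∈ l := by rw [hlcons]; simp
    cases hA : lA' with
    | nil =>
      have hxr : lB' = x :: r := by
        rw [← hlcons, hldef, hA]; rfl
      rw [hxr] at hcostB
      have h1 : pcost pb (x :: r) pa = dist pb x ^ 2 + pcost x r pa := rfl
      rw [h1] at hcostB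
      have hswap : pcost x r x ≤ pcost x r pa + dist pa x ^ 2 := by
        apply pcost_end_swap
        intro z hz
        have hzl : z ∈ l := by
          rcases hz with h | h
          · rw [h]; exact hxl
          · rw [hlcons]; simp [h]
        exact hasgn z hzl x hxl
      have hax : dist pa x ^ 2 ≤ 2 := by
        obtain ⟨h0, h1'⟩ := hsqL x hxl
        exact dist_to_a_le x h0 h1'
      linarith [sq_nonneg (dist pb x)]
    | cons a0 rA =>
      cases hB : lB' with
      | nil =>
        have hxr : lA' = x :: r := by
          rw [← hlcons, hldef, hB]; simp
        rw [hxr] at hcostA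
        have h1 : pcost pa (x :: r) pb = dist pa x ^ 2 + pcost x r pb := rfl
        rw [h1] at hcostA
        have hswap : pcost x r x ≤ pcost x r pb + dist pb x ^ 2 := by
          apply pcost_end_swap
          intro z hz
          have hzl : z ∈ l := by
            rcases hz with h | h
            · rw [h]; exact hxl
            · rw [hlcons]; simp [h]
          exact hbsgn z hzl x hxl
        have hbx : dist pb x ^ 2 ≤ 2 := by
          obtain ⟨h0, h1'⟩ := hsqL x hxl
          exact dist_to_b_le x h0 h1'
        linarith [sq_nonneg (dist pa x)]
      | cons y0 rB =>
        have hle : x :: r = a0 :: (rA ++ lB') := by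
          rw [← hlcons, hldef, hA]; rfl
        injection hle with hxa hr
        subst hxa
        rw [hB] at hr
        have hmem_rA : ∀ z ∈ rA, z ∈ l := by
          intro z hz
          rw [hlcons, hr]; simp [hz]
        have hy0l : y0 ∈ l := by
          rw [hlcons, hr]; simp
        have hmem_rB : ∀ z ∈ rB, z ∈ l := by
          intro z hz
          rw [hlcons, hr]; simp [hz]
        have hs1 : pcost x rA y0 ≤ pcost x rA pb + dist pb y0 ^ 2 := by
          apply pcost_end_swap
          intro z hz
          have hzl : z ∈ l := by
            rcases hz with h | h
            · rw [h]; exact hxl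
            · exact hmem_rA z h
          exact hbsgn z hzl y0 hy0l
        have hs2 : pcost y0 rB x ≤ pcost y0 rB pa + dist pa x ^ 2 := by
          apply pcost_end_swap
          intro z hz
          have hzl : z ∈ l := by
            rcases hz with h | h
            · rw [h]; exact hy0l
            · exact hmem_rB z h
          exact hasgn z hzl x hxl
        have hA' : pcost pa (x :: rA) pb = dist pa x ^ 2 + pcost x rA pb := rfl
        have hB' : pcost pb (y0 :: rB) pa = dist pb y0 ^ 2 + pcost y0 rB pa := rfl
        rw [hA] at hcostA
        rw [hB] at hcostB
        rw [hA'] at hcostA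
        rw [hB'] at hcostB
        rw [hr, pcost_append rA x x y0 rB]
        linarith
  -- the two alternating matchings
  obtain ⟨y, rr, hrcons⟩ : ∃ y rr, r = y :: rr := by
    cases hr : r with
    | nil =>
      exfalso
      rw [hlcons, hr] at hll
      simp at hll
      omega
    | cons y rr => exact ⟨y, rr, rfl⟩
  have heL : Even l.length := by
    rw [← hperm.length_eq, hlen0]; exact heven
  have herr : Even rr.length := by
    rw [hlcons, hrcons] at heL
    simp only [List.length_cons] at heL
    rcases heL with ⟨k, hk⟩
    exact ⟨k - 1, by omega⟩
  have hM := mcost_cyc rr.length rr rfl herr y x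
  have hmtot : mcost l + mcost (r ++ [x]) = pcost x r x := by
    rw [hlcons, hrcons]
    have h1 : mcost (x :: y :: rr) = dist x y ^ 2 + mcost rr := rfl
    have h2 : (y :: rr) ++ [x] = y :: (rr ++ [x]) := rfl
    have h3 : pcost x (y :: rr) x = dist x y ^ 2 + pcost y rr x := rfl
    rw [h1, h2, h3]
    linarith
  -- choose the cheaper matching
  have hchoice : ∃ lc : List E2, L0.Perm lc ∧ mcost lc ≤ 2 := by
    by_cases hc : mcost l ≤ mcost (r ++ [x])
    · exact ⟨l, hperm, by linarith⟩
    · refine ⟨r ++ [x], ?_, by linarith⟩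
      refine hperm.trans ?_
      rw [hlcons]
      exact (List.perm_append_singleton x r).symm
  obtain ⟨lc, hpermc, hmc⟩ := hchoice
  have hndc : lc.Nodup := hnodup.perm hpermc
  have hlenc : Even lc.length := by
    rw [← hpermc.length_eq, hlen0]; exact heven
  have hmemc : ∀ p ∈ X, p ∈ lc := by
    intro p hp
    exact hpermc.subset (Finset.mem_toList.mpr hp)
  have hmemc' : ∀ p ∈ lc, p ∈ X := by
    intro p hp
    exact Finset.mem_toList.mp (hpermc.symm.subset hp)
  refine ⟨fun z => ⟨partner lc z.1, hmemc' _ (partner_mem lc.length lc rfl z.1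
    (hmemc z.1 z.2))⟩, ?_, ?_, ?_⟩
  · intro z
    apply Subtype.ext
    exact partner_invol lc.length lc rfl hndc z.1 (hmemc z.1 z.2)
  · intro z
    intro h
    have := congrArg Subtype.val h
    exact partner_ne lc.length lc rfl hlenc hndc z.1 (hmemc z.1 z.2) this
  · have hsum : ∑ z : ↥X, dist (z : E2) (partner lc z.1) ^ 2
        = ∑ p ∈ X, dist p (partner lc p) ^ 2 :=
      Finset.sum_coe_sort X (fun p => dist p (partner lc p) ^ 2)
    have hsum2 : ∑ p ∈ X, dist p (partner lc p) ^ 2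
        = (L0.map (fun p => dist p (partner lc p) ^ 2)).sum := by
      rw [hL0, Finset.sum_map_toList]
    have hsum3 : (L0.map (fun p => dist p (partner lc p) ^ 2)).sum
        = (lc.map (fun p => dist p (partner lc p) ^ 2)).sum :=
      (hpermc.map _).sum_eq
    have hsum4 := partner_sum lc.length lc rfl hlenc hndc
    calc (1 / 2 : ℝ) * ∑ z : ↥X, dist (z : E2) (partner lc z.1) ^ 2
        = (1/2 : ℝ) * (2 * mcost lc) := by rw [hsum, hsum2, hsum3, hsum4]
      _ = mcost lc := by ring
      _ ≤ 2 := hmc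

end Stmt18Aux
end

section
/- Let k ≥ 3 and let X be a set of n points in the unit cube [0,1]^k ⊂ ℝ^k with 2 ≤ n ≤ 2^k + 2. Then there exists a Hamiltonian cycle H through the n points such that Σ_{e ∈ H} |e|^k ≤ (2 + (8/3)^{k/2}) · k^{k/2}. -/
private theorem coord3 (a b c : ℝ) (ha : a ∈ Set.Icc (0:ℝ) 1) (hb : b ∈ Set.Icc (0:ℝ) 1)
    (hc : c ∈ Set.Icc (0:ℝ) 1) : (a-b)^2 + (a-c)^2 + (b-c)^2 ≤ 2 := by
  obtain ⟨ha0, ha1⟩ := ha; obtain ⟨hb0, hb1⟩ := hb; obtain ⟨hc0, hc1⟩ := hc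
  nlinarith [mul_nonneg ha0 hb0, mul_nonneg hb0 hc0, mul_nonneg ha0 hc0,
    mul_nonneg (sub_nonneg.2 ha1) (sub_nonneg.2 hb1), mul_nonneg (sub_nonneg.2 hb1) (sub_nonneg.2 hc1),
    mul_nonneg (sub_nonneg.2 ha1) (sub_nonneg.2 hc1)]

private theorem twoPaths {α : Type*} (P : α → α → Prop) (hs : Symmetric P) :
    ∀ l : List α, (∀ x ∈ l, ∀ y ∈ l, ∀ z ∈ l, P x y ∨ P x z ∨ P y z) →
    ∃ l₁ l₂ : List α, (l₁ ++ l₂).Perm l ∧ l₁.Chain' P ∧ l₂.Chain' P := by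
  intro l
  induction l with
  | nil => exact fun _ => ⟨[], [], by simp, List.isChain_nil, List.isChain_nil⟩
  | cons a l ih =>
    intro htri
    obtain ⟨l₁, l₂, hp, h1, h2⟩ := ih (fun x hx y hy z hz =>
      htri x (List.mem_cons_of_mem _ hx) y (List.mem_cons_of_mem _ hy) z (List.mem_cons_of_mem _ hz))
    have hmem : ∀ x ∈ l₁ ++ l₂, x ∈ a :: l := fun x hx =>
      List.mem_cons_of_mem _ (hp.mem_iff.mp hx)
    have append_a : ∀ L : List α, L.Perm (l₁ ++ l₂) → (L ++ [a]).Perm (a :: l) := by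
      intro L hL
      have e1 : (L ++ [a]).Perm (a :: L) := by
        simpa using (List.perm_middle (a := a) (l₁ := L) (l₂ := []))
      exact e1.trans ((hL.trans hp).cons a)
    rcases l₁ with _ | ⟨x, t₁⟩
    · exact ⟨[a], l₂, by simpa using (by simpa using hp : l₂.Perm l).cons a, List.isChain_singleton _, h2⟩
    · by_cases hax : P a x
      · exact ⟨a :: x :: t₁, l₂, hp.cons a, List.isChain_cons_cons.2 ⟨hax, h1⟩, h2⟩
      · rcases l₂ with _ | ⟨y, t₂⟩
        · exact ⟨x :: t₁, [a], by simpa using append_a (x :: t₁) (by simp), h1, List.isChain_singleton _⟩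
        · by_cases hay : P a y
          · refine ⟨x :: t₁, a :: y :: t₂, ?_, h1, List.isChain_cons_cons.2 ⟨hay, h2⟩⟩
            exact List.perm_middle.trans (hp.cons a)
          · have hxy : P x y := by
              rcases htri a (by simp) x (hmem x (by simp)) y (hmem y (by simp)) with h | h | h
              · exact absurd h hax
              · exact absurd h hay
              · exact h
            refine ⟨(x :: t₁).reverse ++ (y :: t₂), [a], ?_, ?_, List.isChain_singleton _⟩
            · exact append_a _ (((x :: t₁).reverse_perm).append_right _)
            · rw [List.Chain', List.isChain_append]
              refine ⟨List.isChain_reverse.2 (h1.imp fun _ _ h => hs h), h2, ?_⟩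
              intro u hu v hv
              simp [List.getLast?_reverse] at hu hv
              rw [← hu, ← hv]; exact hxy

private theorem dist_sq_eq {k : ℕ} (x y : EuclideanSpace ℝ (Fin k)) :
    dist x y ^ 2 = ∑ i, (x i - y i)^2 := by
  rw [EuclideanSpace.dist_eq, Real.sq_sqrt (by positivity)]
  simp [Real.dist_eq, sq_abs]

/-- For `k ≥ 3` and a set `X` of `n` points in `[0,1]^k` with `2 ≤ n ≤ 2^k + 2`, there is a
Hamiltonian cycle through the points with unscaled cost at most `(2 + (8/3)^{k/2})·k^{k/2}`. -/
theorem stmt_19 (k : ℕ) (hk : 3 ≤ k)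
    (X : Finset (EuclideanSpace ℝ (Fin k))) (h2 : 2 ≤ X.card) (hcard : X.card ≤ 2 ^ k + 2)
    (hcube : ∀ x ∈ X, ∀ i, x i ∈ Set.Icc (0 : ℝ) 1) :
    ∃ f : ℕ → EuclideanSpace ℝ (Fin k),
      Set.BijOn f (Set.Iio X.card) ↑X ∧
      ∑ i ∈ Finset.range X.card, dist (f i) (f ((i + 1) % X.card)) ^ k ≤
        (2 + Real.sqrt (8 / 3) ^ k) * Real.sqrt k ^ k := by
  classical
  set n := X.card with hn
  have hn0 : 0 < n := by omega
  set rb : ℝ := Real.sqrt (2 * k / 3) with hrb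
  set rB : ℝ := Real.sqrt k with hrB
  have hk0 : (0:ℝ) ≤ (k:ℝ) := Nat.cast_nonneg k
  have hrb_nonneg : 0 ≤ rb := Real.sqrt_nonneg _
  have hrb_le_rB : rb ≤ rB := Real.sqrt_le_sqrt (by linarith)
  -- all pairwise distances at most √k
  have hdistB : ∀ x ∈ X, ∀ y ∈ X, dist x y ≤ rB := by
    intro x hx y hy
    rw [EuclideanSpace.dist_eq, hrB]
    apply Real.sqrt_le_sqrt
    calc ∑ i, dist (x i) (y i) ^ 2 ≤ ∑ _i : Fin k, (1:ℝ) := by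
          apply Finset.sum_le_sum
          intro i _
          have h1 : dist (x i) (y i) ≤ 1 := by
            obtain ⟨hx0, hx1⟩ := hcube x hx i
            obtain ⟨hy0, hy1⟩ := hcube y hy i
            rw [Real.dist_eq, abs_le]; constructor <;> linarith
          calc dist (x i) (y i) ^ 2 ≤ 1^2 := pow_le_pow_left₀ dist_nonneg h1 2
          _ = 1 := one_pow 2
      _ = (k:ℝ) := by simp
  -- triple property
  have htri : ∀ x ∈ X, ∀ y ∈ X, ∀ z ∈ X,
      dist x y ≤ rb ∨ dist x z ≤ rb ∨ dist y z ≤ rb := by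
    intro x hx y hy z hz
    by_contra hcon
    push_neg at hcon
    obtain ⟨h1, h2, h3⟩ := hcon
    have hsq : ∀ u v : EuclideanSpace ℝ (Fin k), rb < dist u v → 2*k/3 < dist u v ^ 2 := by
      intro u v huv
      have := pow_lt_pow_left₀ huv hrb_nonneg (two_ne_zero)
      rwa [hrb, Real.sq_sqrt (by linarith)] at this
    have hsum : dist x y ^2 + dist x z ^2 + dist y z ^2 ≤ 2 * k := by
      rw [dist_sq_eq, dist_sq_eq, dist_sq_eq, ← Finset.sum_add_distrib, ← Finset.sum_add_distrib]
      calc (∑ i, ((x i - y i)^2 + (x i - z i)^2 + (y i - z i)^2)) ≤ ∑ _i : Fin k, (2:ℝ) := by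
            apply Finset.sum_le_sum
            intro i _
            exact coord3 _ _ _ (hcube x hx i) (hcube y hy i) (hcube z hz i)
        _ = 2 * k := by simp [mul_comm]
    have := hsq x y h1; have := hsq x z h2; have := hsq y z h3
    linarith
  -- two short paths covering X
  obtain ⟨l₁, l₂, hperm, hc1, hc2⟩ := twoPaths (fun u v => dist u v ≤ rb)
    (fun u v h => (dist_comm v u).trans_le h) X.toList
    (by
      intro x hx y hy z hz
      exact htri x (Finset.mem_toList.1 hx) y (Finset.mem_toList.1 hy) z (Finset.mem_toList.1 hz))
  set L : List (EuclideanSpace ℝ (Fin k)) := l₁ ++ l₂ with hL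
  have hlen : L.length = n := by rw [hperm.length_eq, Finset.length_toList]
  have hnodup : L.Nodup := hperm.nodup_iff.2 X.nodup_toList
  have hmemL : ∀ x, x ∈ L ↔ x ∈ X := fun x => hperm.mem_iff.trans Finset.mem_toList
  set m := l₁.length with hm
  refine ⟨fun i => L.getD i 0, ?_, ?_⟩
  · constructor
    · intro i hi
      have hi' : i < L.length := by rw [hlen]; exact hi
      show L.getD i 0 ∈ ↑X
      rw [List.getD_eq_getElem _ _ hi']
      exact Finset.mem_coe.2 ((hmemL _).1 (L.getElem_mem hi'))
    constructor
    · intro i hi j hj hij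
      have hi' : i < L.length := by rw [hlen]; exact hi
      have hj' : j < L.length := by rw [hlen]; exact hj
      have hij' : L.getD i 0 = L.getD j 0 := hij
      rw [List.getD_eq_getElem _ _ hi', List.getD_eq_getElem _ _ hj'] at hij'
      replace hij := hij'
      have := List.nodup_iff_injective_get.1 hnodup
        (a₁ := ⟨i, hi'⟩) (a₂ := ⟨j, hj'⟩) (by simpa using hij)
      simpa using congrArg Fin.val this
    · intro x hx
      obtain ⟨i, hi, hix⟩ := List.mem_iff_getElem.1 ((hmemL x).2 (Finset.mem_coe.1 hx))
      refine ⟨i, by rw [Set.mem_Iio, ← hlen]; exact hi, ?_⟩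
      show L.getD i 0 = x
      rw [List.getD_eq_getElem _ _ hi]; exact hix
  · -- cost bound
    have hfX : ∀ j, j < n → L.getD j 0 ∈ X := by
      intro j hj
      have hj' : j < L.length := by rw [hlen]; exact hj
      rw [List.getD_eq_getElem _ _ hj']
      exact (hmemL _).1 (L.getElem_mem hj')
    have key : ∀ i ∈ Finset.range n,
        dist (L.getD i 0) (L.getD ((i+1) % n) 0) ^ k ≤
        (if i+1 = m ∨ i+1 = n then rB ^ k else rb ^ k) := by
      intro i hi
      rw [Finset.mem_range] at hi
      by_cases hbad : i+1 = m ∨ i+1 = n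
      · rw [if_pos hbad]
        exact pow_le_pow_left₀ dist_nonneg
          (hdistB _ (hfX i hi) _ (hfX _ (Nat.mod_lt _ hn0))) k
      · rw [if_neg hbad]
        push_neg at hbad
        obtain ⟨hm1, hn1⟩ := hbad
        have hi1 : i + 1 < n := by omega
        rw [Nat.mod_eq_of_lt hi1]
        have hiL : i < L.length := by omega
        have hi1L : i + 1 < L.length := by omega
        rw [List.getD_eq_getElem _ _ hiL, List.getD_eq_getElem _ _ hi1L]
        apply pow_le_pow_left₀ dist_nonneg _ k
        have hLlen : L.length = m + l₂.length := by rw [hL, List.length_append]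
        rcases Nat.lt_or_ge (i+1) m with hlt | hge
        · have e1 : L[i] = l₁[i]'(by omega) := List.getElem_append_left (by omega)
          have e2 : L[i+1] = l₁[i+1]'hlt := List.getElem_append_left hlt
          rw [e1, e2]
          have := List.isChain_iff_getElem.1 hc1 i (by omega)
          simpa using this
        · have hgem : m ≤ i := by omega
          have hlt2 : i + 1 - m < l₂.length := by omega
          have e1 : L[i] = l₂[i - m]'(by omega) := List.getElem_append_right hgem
          have e2 : L[i+1] = l₂[i + 1 - m]'hlt2 := List.getElem_append_right (by omega)
          rw [e1, e2]
          have := List.isChain_iff_getElem.1 hc2 (i - m) (by omega)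
          have heq : i + 1 - m = (i - m) + 1 := by omega
          simp only [heq]
          exact this
    calc ∑ i ∈ Finset.range n, dist (L.getD i 0) (L.getD ((i+1) % n) 0) ^ k
        ≤ ∑ i ∈ Finset.range n, (if i+1 = m ∨ i+1 = n then rB ^ k else rb ^ k) :=
          Finset.sum_le_sum key
      _ ≤ (2 + Real.sqrt (8/3) ^ k) * rB ^ k := by
          rw [Finset.sum_ite]
          set S := (Finset.range n).filter (fun i => i+1 = m ∨ i+1 = n) with hS
          set T := (Finset.range n).filter (fun i => ¬(i+1 = m ∨ i+1 = n)) with hT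
          have hcard2 : S.card ≤ 2 := by
            have hsub : S ⊆ {m-1, n-1} := by
              intro i hiS
              rw [hS, Finset.mem_filter, Finset.mem_range] at hiS
              simp only [Finset.mem_insert, Finset.mem_singleton]
              omega
            calc S.card ≤ ({m-1, n-1} : Finset ℕ).card := Finset.card_le_card hsub
              _ ≤ 2 := by
                  apply le_trans (Finset.card_insert_le _ _)
                  simp
          have hcardT : T.card = n - S.card := by
            have := Finset.card_filter_add_card_filter_not
              (s := Finset.range n) (p := fun i => i+1 = m ∨ i+1 = n)
            rw [← hS, ← hT] at this
            simp only [Finset.card_range] at this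
            omega
          have hSn : S.card ≤ n := le_trans (Finset.card_le_card (Finset.filter_subset _ _))
            (by simp)
          rw [Finset.sum_const, Finset.sum_const, hcardT]
          -- now a real-number computation
          have hrBk : (0:ℝ) ≤ rB ^ k := pow_nonneg (Real.sqrt_nonneg _) k
          have hrbk : (0:ℝ) ≤ rb ^ k := pow_nonneg hrb_nonneg k
          have hrbBk : rb ^ k ≤ rB ^ k := pow_le_pow_left₀ hrb_nonneg hrb_le_rB k
          have hfinal : Real.sqrt (8/3) ^ k * rB ^ k = 2^k * rb ^ k := by
            rw [← mul_pow, ← mul_pow]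
            congr 1
            rw [hrB, hrb]
            have h4 : Real.sqrt 4 = 2 := by
              rw [show (4:ℝ) = 2^2 by norm_num, Real.sqrt_sq (by norm_num : (0:ℝ) ≤ 2)]
            calc Real.sqrt (8/3) * Real.sqrt k = Real.sqrt (8/3 * k) :=
                  (Real.sqrt_mul (by norm_num) _).symm
              _ = Real.sqrt (4 * (2 * k / 3)) := by congr 1; ring
              _ = Real.sqrt 4 * Real.sqrt (2 * k / 3) := Real.sqrt_mul (by norm_num) _
              _ = 2 * Real.sqrt (2 * k / 3) := by rw [h4]
          rw [nsmul_eq_mul, nsmul_eq_mul, add_mul, hfinal]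
          have hc2' : ((S.card : ℝ)) ≤ 2 := by exact_mod_cast hcard2
          have hTn : ((n - S.card : ℕ) : ℝ) = (n:ℝ) - S.card := by
            push_cast [Nat.cast_sub hSn]; ring
          rw [hTn]
          have hncast : (n:ℝ) ≤ 2^k + 2 := by
            calc (n:ℝ) ≤ ((2^k + 2 : ℕ) : ℝ) := by exact_mod_cast hcard
              _ = 2^k + 2 := by push_cast; ring
          nlinarith [mul_nonneg (sub_nonneg.2 hc2') (sub_nonneg.2 hrbBk),
            mul_nonneg (sub_nonneg.2 hncast) hrbk]
end
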